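/- arXiv:1308.5359 — 7 statements merged into one kernel-verified Lean document; each statement's English description precedes it below -/
import Mathlib

section
/- Let N ≥ 1, γ ≥ 0, t ≥ 0, let ρ be an (N+1)×(N+1) complex matrix, and let J be the diagonal (N+1)×(N+1) real matrix with diagonal entries J_{kk} = (2k-N)/2. Define Γ_t ρ entrywise by (Γ_t ρ)_{kℓ} = e^{-γ t (k-ℓ)²/2} ρ_{kℓ}. Then Γ_t ρ admits the continuous Kraus representation Γ_t ρ = (1/(2√π)) ∫_{-∞}^{+∞} e^{-u²/4} e^{-i √(γt/2) u J} ρ e^{i √(γt/2) u J} du, where the integral of the matrix-valued integrand is taken entrywise (Bochner integral). -/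
open MeasureTheory

/-- For `N ≥ 1`, `γ, t ≥ 0` and an `(N+1)×(N+1)` complex matrix `ρ`, the dephased matrix
`(Γ_t ρ)_{kℓ} = e^{-γt(k-ℓ)²/2} ρ_{kℓ}` admits the continuous Kraus representation
`Γ_t ρ = (1/(2√π)) ∫ℝ e^{-u²/4} e^{-i√(γt/2)uJ} ρ e^{i√(γt/2)uJ} du` (entrywise Bochner
integral), where `J` is diagonal with entries `(2k-N)/2` and `e^{±iθJ}` are the corresponding
diagonal unitaries. -/
theorem dephasing_kraus_representation (N : ℕ) (hN : 1 ≤ N) (γ t : ℝ)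
    (hγ : 0 ≤ γ) (ht : 0 ≤ t) (ρ : Matrix (Fin (N + 1)) (Fin (N + 1)) ℂ) :
    let θ : ℝ := Real.sqrt (γ * t / 2)
    let U : ℝ → Matrix (Fin (N + 1)) (Fin (N + 1)) ℂ := fun u =>
      Matrix.diagonal fun k =>
        Complex.exp (-Complex.I * (θ : ℂ) * (u : ℂ) * (((2 * (k : ℝ) - (N : ℝ)) / 2 : ℝ) : ℂ))
    let V : ℝ → Matrix (Fin (N + 1)) (Fin (N + 1)) ℂ := fun u =>
      Matrix.diagonal fun k =>
        Complex.exp (Complex.I * (θ : ℂ) * (u : ℂ) * (((2 * (k : ℝ) - (N : ℝ)) / 2 : ℝ) : ℂ))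
    ∀ k ℓ : Fin (N + 1),
      ((Real.exp (-(γ * t * ((k : ℝ) - (ℓ : ℝ)) ^ 2) / 2) : ℝ) : ℂ) * ρ k ℓ =
        (1 / (2 * Real.sqrt Real.pi) : ℂ) *
          ∫ u : ℝ, ((Real.exp (-u ^ 2 / 4) : ℝ) : ℂ) * ((U u * ρ * V u) k ℓ) := by
  intro θ U V k ℓ
  have hθ2 : θ ^ 2 = γ * t / 2 := Real.sq_sqrt (by positivity)
  set s : ℂ := ((θ * ((ℓ : ℝ) - (k : ℝ)) : ℝ) : ℂ) with hs
  have comb : ∀ (a A B C D r : ℂ), a + A + B = C + D →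
      Complex.exp a * (Complex.exp A * r * Complex.exp B)
        = r * (Complex.exp C * Complex.exp D) := by
    intro a A B C D r h
    rw [← Complex.exp_add, ← h, Complex.exp_add, Complex.exp_add]; ring
  have key : ∀ u : ℝ, ((Real.exp (-u ^ 2 / 4) : ℝ) : ℂ) * ((U u * ρ * V u) k ℓ)
      = ρ k ℓ * (Complex.exp (Complex.I * s * u) * Complex.exp (-(1/4 : ℂ) * u ^ 2)) := by
    intro u
    simp only [U, V, Matrix.mul_diagonal, Matrix.diagonal_mul]
    rw [Complex.ofReal_exp]
    apply comb
    rw [hs]; push_cast; ring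
  simp_rw [key]
  rw [integral_const_mul, fourierIntegral_gaussian (b := 1/4) (by norm_num) s]
  have h4 : ((Real.pi : ℂ) / (1/4)) ^ (1/2 : ℂ) = ((2 * Real.sqrt Real.pi : ℝ) : ℂ) := by
    have h1 : ((Real.pi : ℂ) / (1/4)) = ((4 * Real.pi : ℝ) : ℂ) := by push_cast; ring
    have h2 : ((1/2 : ℂ)) = (((1/2 : ℝ) : ℂ)) := by norm_num
    have h3 : (4 * Real.pi) ^ ((1:ℝ)/2) = 2 * Real.sqrt Real.pi := by
      rw [← Real.sqrt_eq_rpow, show (4:ℝ) * Real.pi = 2^2 * Real.pi by norm_num,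
        Real.sqrt_mul (by positivity), Real.sqrt_sq (by norm_num)]
    rw [h1, h2, ← Complex.ofReal_cpow (by positivity), h3]
  have hexp : Complex.exp (-s ^ 2 / (4 * (1/4)))
      = ((Real.exp (-(γ * t * ((k : ℝ) - (ℓ : ℝ)) ^ 2) / 2) : ℝ) : ℂ) := by
    have hsq : s ^ 2 = ((θ ^ 2 * ((ℓ : ℝ) - (k : ℝ)) ^ 2 : ℝ) : ℂ) := by
      rw [hs]; push_cast; ring
    rw [Complex.ofReal_exp, hsq, hθ2]
    congr 1
    push_cast; ring
  rw [h4, hexp]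
  have hne : ((2 * Real.sqrt Real.pi : ℝ) : ℂ) ≠ 0 := by
    exact_mod_cast ne_of_gt (by positivity : (0:ℝ) < 2 * Real.sqrt Real.pi)
  push_cast at hne ⊢
  field_simp
end

section
/- Let N ≥ 0 and let ρ be an (N+1)×(N+1) complex matrix. With B the partial-transpose matrix defined by B_{(p,q),(r,s)} = ρ_{q p} if q = r and p = s, and 0 otherwise, the trace norm of B satisfies ‖B‖₁ = Σ_{k,ℓ=0}^{N} |ρ_{kℓ}|. Consequently, if in addition ρ is positive semidefinite with trace 1, the negativity 𝒩(ρ) := (‖B‖₁ − 1)/2 equals (1/2) Σ_{k≠ℓ} |ρ_{kℓ}|. -/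
open scoped ComplexOrder

/-- The square root of a positive semidefinite matrix, as `Matrix.PosSemidef.sqrt` was defined
in the older Mathlib (removed since). -/
noncomputable def Matrix.PosSemidef.sqrt {n 𝕜 : Type*} [Fintype n] [DecidableEq n] [RCLike 𝕜]
    {A : Matrix n n 𝕜} (hA : A.PosSemidef) : Matrix n n 𝕜 :=
  (hA.1.eigenvectorUnitary : Matrix n n 𝕜) *
    Matrix.diagonal (fun i => ((Real.sqrt (hA.1.eigenvalues i) : ℝ) : 𝕜)) *
    (star hA.1.eigenvectorUnitary : Matrix n n 𝕜)

/-- For an `(N+1)×(N+1)` complex matrix `ρ`, with `B` the partial-transpose matrix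
(`B_{(p,q),(r,s)} = ρ_{qp}` if `q = r` and `p = s`, else `0`), the trace norm
`‖B‖₁ = Tr √(Bᴴ B)` equals `Σ_{k,ℓ} |ρ_{kℓ}|`; consequently, if `ρ` is positive semidefinite
with trace `1`, the negativity `𝒩(ρ) = (‖B‖₁ − 1)/2` equals `(1/2) Σ_{k≠ℓ} |ρ_{kℓ}|`. -/
theorem partial_transpose_trace_norm_and_negativity (N : ℕ)
    (ρ : Matrix (Fin (N + 1)) (Fin (N + 1)) ℂ) :
    let B : Matrix (Fin (N + 1) × Fin (N + 1)) (Fin (N + 1) × Fin (N + 1)) ℂ :=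
      Matrix.of fun x y => if x.2 = y.1 ∧ x.1 = y.2 then ρ x.2 x.1 else 0
    ((Matrix.PosSemidef.sqrt (Matrix.posSemidef_conjTranspose_mul_self B)).trace
        = ((∑ k : Fin (N + 1), ∑ ℓ : Fin (N + 1), ‖ρ k ℓ‖ : ℝ) : ℂ)) ∧
    (ρ.PosSemidef → ρ.trace = 1 →
      (((Matrix.PosSemidef.sqrt (Matrix.posSemidef_conjTranspose_mul_self B)).trace.re - 1) / 2
        = (1 / 2 : ℝ) * ∑ k : Fin (N + 1), ∑ ℓ : Fin (N + 1),
            if k = ℓ then 0 else ‖ρ k ℓ‖)) := by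
  intro B
  set D : Matrix (Fin (N + 1) × Fin (N + 1)) (Fin (N + 1) × Fin (N + 1)) ℂ :=
    Matrix.diagonal fun x => (‖ρ x.1 x.2‖ : ℂ) with hD
  have hDpsd : D.PosSemidef := by
    refine Matrix.PosSemidef.diagonal fun x => ?_
    simp [Complex.le_def, norm_nonneg]
  have hsq : D ^ 2 = B.conjTranspose * B := by
    rw [hD, pow_two, Matrix.diagonal_mul_diagonal]
    ext ⟨r, s⟩ ⟨r', s'⟩
    rw [Matrix.mul_apply, Finset.sum_eq_single ((s, r) : Fin (N + 1) × Fin (N + 1))]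
    · by_cases h : r = r' ∧ s = s'
      · obtain ⟨rfl, rfl⟩ := h
        simp only [Matrix.diagonal_apply_eq, Matrix.conjTranspose_apply, Matrix.of_apply,
          and_self, if_true, B, Pi.mul_apply]
        rw [mul_comm (star (ρ r s)), Complex.star_def, Complex.mul_conj,
          Complex.normSq_eq_norm_sq]
        push_cast
        ring
      · have hne : ((r, s) : Fin (N + 1) × Fin (N + 1)) ≠ (r', s') := by
          simp only [ne_eq, Prod.mk.injEq]; tauto
        rw [Matrix.diagonal_apply_ne _ hne]
        have h' : ¬(r = r' ∧ s = s') := h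
        simp only [Matrix.conjTranspose_apply, Matrix.of_apply, B]
        rw [if_neg h', mul_zero]
    · rintro ⟨p, q⟩ - hpq
      have h0 : ¬(q = r ∧ p = s) := by
        rintro ⟨rfl, rfl⟩; exact hpq rfl
      simp only [Matrix.conjTranspose_apply, Matrix.of_apply, B]
      rw [if_neg h0, star_zero, zero_mul]
    · simp
  have hsqrt : Matrix.PosSemidef.sqrt (Matrix.posSemidef_conjTranspose_mul_self B) = D := by
    open scoped MatrixOrder in
    have h1 : Matrix.PosSemidef.sqrt (Matrix.posSemidef_conjTranspose_mul_self B)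
        = CFC.sqrt (B.conjTranspose * B) := by
      rw [CFC.sqrt_eq_cfc, cfc_nnreal_eq_real _ _
        (Matrix.nonneg_iff_posSemidef.mpr (Matrix.posSemidef_conjTranspose_mul_self B)),
        (Matrix.posSemidef_conjTranspose_mul_self B).1.cfc_eq]
      simp [Matrix.IsHermitian.cfc, Matrix.PosSemidef.sqrt, Function.comp_def,
        Real.toNNReal_of_nonneg ((Matrix.posSemidef_conjTranspose_mul_self B).eigenvalues_nonneg _),
        max_eq_left ((Matrix.posSemidef_conjTranspose_mul_self B).eigenvalues_nonneg _)]
    open scoped MatrixOrder in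
    rw [h1]
    open scoped MatrixOrder in
    exact CFC.sqrt_unique (by rw [← pow_two]; exact hsq) (Matrix.nonneg_iff_posSemidef.mpr hDpsd)
  have htr : (Matrix.PosSemidef.sqrt (Matrix.posSemidef_conjTranspose_mul_self B)).trace
      = ((∑ k : Fin (N + 1), ∑ ℓ : Fin (N + 1), ‖ρ k ℓ‖ : ℝ) : ℂ) := by
    rw [hsqrt]
    simp only [hD, Matrix.trace, Matrix.diag, Matrix.diagonal_apply_eq]
    rw [Fintype.sum_prod_type]
    push_cast
    rfl
  refine ⟨htr, fun hpsd htr1 => ?_⟩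
  have hre : (Matrix.PosSemidef.sqrt (Matrix.posSemidef_conjTranspose_mul_self B)).trace.re
      = ∑ k : Fin (N + 1), ∑ ℓ : Fin (N + 1), ‖ρ k ℓ‖ := by
    rw [htr, Complex.ofReal_re]
  rw [hre]
  have hdiag : ∀ k, (ρ k k : ℂ) = (‖ρ k k‖ : ℂ) := by
    intro k
    have h0 : (0 : ℂ) ≤ ρ k k := by
      exact hpsd.diag_nonneg
    obtain ⟨hre0, him0⟩ := Complex.le_def.mp h0
    have hρ : ρ k k = ((ρ k k).re : ℂ) := by
      apply Complex.ext <;> simp [← him0]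
    rw [hρ]
    simp [Complex.norm_of_nonneg (by simpa using hre0),
      abs_of_nonneg (show (0 : ℝ) ≤ (ρ k k).re by simpa using hre0)]
  have hsum1 : ∑ k : Fin (N + 1), ‖ρ k k‖ = 1 := by
    have h1 : (∑ k : Fin (N + 1), (‖ρ k k‖ : ℂ)) = 1 := by
      rw [← htr1]; simp only [Matrix.trace, Matrix.diag]
      exact Finset.sum_congr rfl fun k _ => (hdiag k).symm
    exact_mod_cast h1
  have hsplit : ∀ k, ∑ ℓ : Fin (N + 1), ‖ρ k ℓ‖
      = ‖ρ k k‖ + ∑ ℓ : Fin (N + 1), (if k = ℓ then 0 else ‖ρ k ℓ‖) := by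
    intro k
    have hterm : ∀ ℓ, ‖ρ k ℓ‖
        = (if k = ℓ then ‖ρ k k‖ else 0)
          + (if k = ℓ then 0 else ‖ρ k ℓ‖) := by
      intro ℓ; split_ifs with h <;> simp [h]
    rw [Finset.sum_congr rfl fun ℓ _ => hterm ℓ, Finset.sum_add_distrib, Finset.sum_ite_eq]
    simp
  calc ((∑ k : Fin (N + 1), ∑ ℓ : Fin (N + 1), ‖ρ k ℓ‖) - 1) / 2
      = ((∑ k : Fin (N + 1), (‖ρ k k‖
          + ∑ ℓ : Fin (N + 1), (if k = ℓ then 0 else ‖ρ k ℓ‖))) - 1) / 2 := by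
        rw [Finset.sum_congr rfl fun k _ => hsplit k]
    _ = (1 / 2 : ℝ) * ∑ k : Fin (N + 1), ∑ ℓ : Fin (N + 1),
          if k = ℓ then 0 else ‖ρ k ℓ‖ := by
        rw [Finset.sum_add_distrib, hsum1]; ring
end

section
/- Let N ≥ 1 and let A be the symmetric tridiagonal (N+1)×(N+1) real matrix with zero diagonal and off-diagonal entries A_{k,k+1} = A_{k+1,k} = (1/2)√((k+1)(N−k)) for k ∈ {0,…,N−1}. Then for every k ∈ {0,…,N}, the diagonal entry (A²)_{kk} equals (N + 2k(N−k))/4. Consequently the variance ⟨e_k, A² e_k⟩ − ⟨e_k, A e_k⟩² of A in the standard basis vector e_k equals (N + 2k(N−k))/4, so the quantum Fisher information 4·variance equals N + 2k(N−k), exceeding N for all 0 < k < N. -/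
/-- For `N ≥ 1`, let `A` be the symmetric tridiagonal `(N+1)×(N+1)` real matrix with zero
diagonal and off-diagonal entries `A_{k,k+1} = A_{k+1,k} = (1/2)√((k+1)(N-k))`. Then for every
`k`, `(A²)_{kk} = (N + 2k(N-k))/4`; consequently the variance `⟨e_k, A²e_k⟩ - ⟨e_k, Ae_k⟩²`
equals `(N + 2k(N-k))/4`, so the quantum Fisher information `4·variance` equals
`N + 2k(N-k)`, exceeding `N` for all `0 < k < N`. -/
theorem tridiagonal_Jx_variance (N : ℕ) (hN : 1 ≤ N) :
    let A : Matrix (Fin (N + 1)) (Fin (N + 1)) ℝ :=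
      Matrix.of fun k ℓ =>
        if (k : ℕ) + 1 = (ℓ : ℕ) then (1 / 2) * Real.sqrt (((k : ℝ) + 1) * ((N : ℝ) - (k : ℝ)))
        else if (ℓ : ℕ) + 1 = (k : ℕ) then
          (1 / 2) * Real.sqrt (((ℓ : ℝ) + 1) * ((N : ℝ) - (ℓ : ℝ)))
        else 0
    ∀ k : Fin (N + 1),
      (A * A) k k = ((N : ℝ) + 2 * (k : ℝ) * ((N : ℝ) - (k : ℝ))) / 4 ∧
      4 * ((A * A) k k - (A k k) ^ 2) = (N : ℝ) + 2 * (k : ℝ) * ((N : ℝ) - (k : ℝ)) ∧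
      (0 < (k : ℕ) → (k : ℕ) < N →
        (N : ℝ) < (N : ℝ) + 2 * (k : ℝ) * ((N : ℝ) - (k : ℝ))) := by
  intro A k
  have hkN : (k : ℕ) ≤ N := Nat.lt_succ_iff.mp k.isLt
  have hsq : ∀ m : ℕ, m ≤ N →
      Real.sqrt (((m : ℝ) + 1) * ((N : ℝ) - (m : ℝ))) *
        Real.sqrt (((m : ℝ) + 1) * ((N : ℝ) - (m : ℝ))) =
      ((m : ℝ) + 1) * ((N : ℝ) - (m : ℝ)) := by
    intro m hm
    refine Real.mul_self_sqrt (mul_nonneg (by positivity) ?_)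
    have : (m : ℝ) ≤ (N : ℝ) := by exact_mod_cast hm
    linarith
  have key : ∀ j : Fin (N + 1), A k j * A j k =
      (if (k : ℕ) + 1 = (j : ℕ) then (((k : ℝ) + 1) * ((N : ℝ) - (k : ℝ))) / 4 else 0) +
      (if (j : ℕ) + 1 = (k : ℕ) then (((j : ℝ) + 1) * ((N : ℝ) - (j : ℝ))) / 4 else 0) := by
    intro j
    have hjN : (j : ℕ) ≤ N := Nat.lt_succ_iff.mp j.isLt
    simp only [A, Matrix.of_apply]
    split_ifs with h1 h2 h2
    · omega
    · have := hsq (k : ℕ) hkN; nlinarith [this]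
    · have := hsq (j : ℕ) hjN; nlinarith [this]
    · ring
  have hmul : (A * A) k k = ∑ j, A k j * A j k := Matrix.mul_apply
  rw [Finset.sum_congr rfl (fun j _ => key j), Finset.sum_add_distrib] at hmul
  -- first sum
  have h1 : (∑ j : Fin (N + 1),
      if (k : ℕ) + 1 = (j : ℕ) then (((k : ℝ) + 1) * ((N : ℝ) - (k : ℝ))) / 4 else 0) =
      if (k : ℕ) < N then (((k : ℝ) + 1) * ((N : ℝ) - (k : ℝ))) / 4 else 0 := by
    by_cases h : (k : ℕ) < N
    · rw [if_pos h]
      refine Finset.sum_eq_single_of_mem ⟨(k : ℕ) + 1, by omega⟩ (Finset.mem_univ _) ?_ |>.trans ?_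
      · intro b _ hb
        rw [if_neg]
        intro hc
        exact hb (Fin.ext (by simpa using hc.symm))
      · simp
    · rw [if_neg h]
      refine Finset.sum_eq_zero fun j _ => ?_
      rw [if_neg]
      have := Nat.lt_succ_iff.mp j.isLt
      omega
  -- second sum
  have h2 : (∑ j : Fin (N + 1),
      if (j : ℕ) + 1 = (k : ℕ) then (((j : ℝ) + 1) * ((N : ℝ) - (j : ℝ))) / 4 else 0) =
      if 0 < (k : ℕ) then ((k : ℝ) * ((N : ℝ) - (k : ℝ) + 1)) / 4 else 0 := by
    by_cases h : 0 < (k : ℕ)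
    · rw [if_pos h]
      refine Finset.sum_eq_single_of_mem ⟨(k : ℕ) - 1, by omega⟩ (Finset.mem_univ _) ?_ |>.trans ?_
      · intro b _ hb
        rw [if_neg]
        intro hc
        exact hb (Fin.ext (by simp; omega))
      · rw [if_pos (by simp; omega)]
        have h1' : ((((k : ℕ) - 1 : ℕ)) : ℝ) = (k : ℝ) - 1 := by
          push_cast [h]; ring
        simp only [h1']
        ring
    · rw [if_neg h]
      refine Finset.sum_eq_zero fun j _ => ?_
      rw [if_neg]
      omega
  rw [h1, h2] at hmul
  have hdiag : A k k = 0 := by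
    simp only [A, Matrix.of_apply]
    rw [if_neg (by omega), if_neg (by omega)]
  have hcast : ((k : ℕ) : ℝ) ≤ (N : ℝ) := by exact_mod_cast hkN
  have hmain : (A * A) k k = ((N : ℝ) + 2 * (k : ℝ) * ((N : ℝ) - (k : ℝ))) / 4 := by
    rw [hmul]
    by_cases hk0 : 0 < (k : ℕ)
    · by_cases hkN' : (k : ℕ) < N
      · rw [if_pos hkN', if_pos hk0]; ring
      · have hkeq : (k : ℕ) = N := by omega
        rw [if_neg hkN', if_pos hk0]
        have : ((k : ℕ) : ℝ) = (N : ℝ) := by exact_mod_cast hkeq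
        rw [this]; ring
    · have hkeq : (k : ℕ) = 0 := by omega
      have hkN' : (k : ℕ) < N := by omega
      rw [if_pos hkN', if_neg hk0]
      have : ((k : ℕ) : ℝ) = 0 := by exact_mod_cast hkeq
      rw [this]; ring
  refine ⟨hmain, ?_, ?_⟩
  · rw [hmain, hdiag]; ring
  · intro hk0 hkN'
    have h0 : (0 : ℝ) < (k : ℝ) := by exact_mod_cast hk0
    have hN' : ((k : ℕ) : ℝ) < (N : ℝ) := by exact_mod_cast hkN'
    nlinarith
end

section
/- For every natural number N ≥ 0 and every μ ≥ 0, 2^{-2N} Σ_{k=0}^{N} Σ_{ℓ=0}^{N} binom(N,k) binom(N,ℓ) e^{-μ (k−ℓ)²} = ∫_{-∞}^{+∞} (e^{-u²}/√π) cos^{2N}(u√μ) du. -/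
open MeasureTheory
open Real

lemma gauss_eq (b : ℝ) (u : ℝ) :
    (Complex.exp (Complex.I * b * u) * Complex.exp (-(1:ℂ) * u ^ 2)).re
      = Real.exp (-u^2) * Real.cos (b*u) := by
  have h1 : Complex.I * (b:ℂ) * (u:ℂ) = ((b*u : ℝ) : ℂ) * Complex.I := by push_cast; ring
  have h2 : (-(1:ℂ) * (u:ℂ) ^ 2) = ((-u^2 : ℝ) : ℂ) := by push_cast; ring
  rw [h1, h2, ← Complex.ofReal_exp, Complex.mul_re, Complex.ofReal_re, Complex.ofReal_im,
    mul_zero, sub_zero, Complex.exp_ofReal_mul_I_re, mul_comm]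

private lemma sum_eq (b : ℝ) (u : ℝ) : (-(1:ℂ)*u^2 + (Complex.I*b)*u + 0)
    = Complex.I*b*u + (-(1:ℂ)*u^2) := by ring

lemma gauss_cos_integrable (b : ℝ) :
    Integrable (fun u : ℝ => Real.exp (-u^2) * Real.cos (b*u)) := by
  have h : Integrable (fun x : ℝ => Complex.exp (-(1:ℂ) * x ^ 2 + (Complex.I * b) * x + 0)) :=
    integrable_cexp_quadratic (by norm_num) _ _
  refine h.re.congr (Filter.Eventually.of_forall fun u => ?_)
  simp only [RCLike.re_to_complex, sum_eq, Complex.exp_add]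
  exact gauss_eq b u

lemma gauss_cos (b : ℝ) :
    ∫ u : ℝ, Real.exp (-u^2) * Real.cos (b*u) = Real.sqrt π * Real.exp (-b^2/4) := by
  have h := fourierIntegral_gaussian (b := 1) (by norm_num) (b : ℂ)
  have hint : Integrable
      (fun x : ℝ => Complex.exp (Complex.I * b * x) * Complex.exp (-(1:ℂ) * x ^ 2)) := by
    have h : Integrable (fun x : ℝ => Complex.exp (-(1:ℂ) * x ^ 2 + (Complex.I * b) * x + 0)) :=
      integrable_cexp_quadratic (by norm_num) _ _
    refine h.congr (Filter.Eventually.of_forall fun u => ?_)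
    simp only [sum_eq, Complex.exp_add]
  calc ∫ u : ℝ, Real.exp (-u^2) * Real.cos (b*u)
      = ∫ u : ℝ, (Complex.exp (Complex.I * b * u) * Complex.exp (-(1:ℂ) * u ^ 2)).re := by
        simp_rw [gauss_eq]
    _ = (∫ u : ℝ, Complex.exp (Complex.I * b * u) * Complex.exp (-(1:ℂ) * u ^ 2)).re :=
        integral_re hint
    _ = Real.sqrt π * Real.exp (-b^2/4) := by
        rw [h]
        have h1 : ((π : ℂ) / 1) ^ (1/2 : ℂ) = ((Real.sqrt π : ℝ) : ℂ) := by
          rw [div_one, show (1/2 : ℂ) = ((1/2 : ℝ) : ℂ) by norm_num,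
            ← Complex.ofReal_cpow Real.pi_pos.le]
          norm_num [Real.sqrt_eq_rpow]
        have h2 : (-(b:ℂ)^2/(4*1)) = ((-b^2/4 : ℝ) : ℂ) := by push_cast; ring
        rw [h1, h2, ← Complex.ofReal_exp, ← Complex.ofReal_mul, Complex.ofReal_re]

lemma two_cos_pow (N : ℕ) (x : ℝ) :
    (2:ℝ)^N * Real.cos x ^ N
      = ∑ k ∈ Finset.range (N+1), (N.choose k : ℝ) * Real.cos ((2*(k:ℝ) - N) * x) := by
  have key : ((2:ℂ) * Complex.cos x)^N
      = ∑ k ∈ Finset.range (N+1),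
          (((N.choose k : ℝ)) : ℂ) * Complex.exp ((((2*(k:ℝ) - N) * x : ℝ)) * Complex.I) := by
    have h2 : (2:ℂ) * Complex.cos x
        = Complex.exp ((x:ℂ) * Complex.I) + Complex.exp (-(x:ℂ) * Complex.I) := by
      rw [Complex.cos]; ring
    rw [h2, add_pow]
    refine Finset.sum_congr rfl fun k hk => ?_
    have hk' : k ≤ N := Finset.mem_range_succ_iff.mp hk
    rw [← Complex.exp_nat_mul, ← Complex.exp_nat_mul, ← Complex.exp_add]
    have e : (k:ℂ) * ((x:ℂ)*Complex.I) + ((N-k : ℕ):ℂ) * (-(x:ℂ)*Complex.I)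
        = (((2*(k:ℝ)-N)*x : ℝ) : ℂ) * Complex.I := by
      rw [Nat.cast_sub hk']
      push_cast
      ring
    rw [e, mul_comm]
    norm_cast
  have := congrArg Complex.re key
  rw [show (2:ℂ) * Complex.cos (x:ℂ) = (((2 * Real.cos x : ℝ)) : ℂ) by
      push_cast [Complex.ofReal_cos]; ring,
    ← Complex.ofReal_pow, Complex.ofReal_re, Complex.re_sum] at this
  rw [mul_pow] at this
  rw [this]
  refine Finset.sum_congr rfl fun k hk => ?_
  rw [Complex.mul_re, Complex.ofReal_re, Complex.ofReal_im, zero_mul, sub_zero,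
    Complex.exp_ofReal_mul_I_re]

lemma cos_cos_split (A B : ℝ) :
    (fun u : ℝ => Real.exp (-u^2) * (Real.cos (A*u) * Real.cos (B*u)))
      = fun u : ℝ => (1/2) * (Real.exp (-u^2) * Real.cos ((A-B)*u))
          + (1/2) * (Real.exp (-u^2) * Real.cos ((A+B)*u)) := by
  funext u
  have h : Real.cos (A*u) * Real.cos (B*u)
      = (Real.cos (A*u - B*u) + Real.cos (A*u + B*u))/2 := by
    rw [Real.cos_sub, Real.cos_add]; ring
  rw [h, show A*u - B*u = (A-B)*u by ring, show A*u + B*u = (A+B)*u by ring]; ring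

lemma gauss_cos_cos_integrable (A B : ℝ) :
    Integrable (fun u : ℝ => Real.exp (-u^2) * (Real.cos (A*u) * Real.cos (B*u))) := by
  rw [cos_cos_split]
  exact ((gauss_cos_integrable _).const_mul _).add ((gauss_cos_integrable _).const_mul _)

lemma gauss_cos_cos (A B : ℝ) :
    ∫ u : ℝ, Real.exp (-u^2) * (Real.cos (A*u) * Real.cos (B*u))
      = Real.sqrt π * ((Real.exp (-(A-B)^2/4) + Real.exp (-(A+B)^2/4))/2) := by
  rw [cos_cos_split,
    integral_add ((gauss_cos_integrable _).const_mul _) ((gauss_cos_integrable _).const_mul _),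
    integral_const_mul, integral_const_mul, gauss_cos, gauss_cos]
  ring


/-- For every `N ≥ 0` and `μ ≥ 0`,
`2^{-2N} Σ_{k,ℓ=0}^{N} C(N,k) C(N,ℓ) e^{-μ(k-ℓ)²} = ∫ℝ (e^{-u²}/√π) cos^{2N}(u√μ) du`
(the purity `Tr[ρ²(t)]` of the dephased state at `μ = γt`). -/
theorem purity_integral_representation (N : ℕ) (μ : ℝ) (hμ : 0 ≤ μ) :
    (1 / (2 : ℝ) ^ (2 * N)) * ∑ k ∈ Finset.range (N + 1), ∑ ℓ ∈ Finset.range (N + 1),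
        (N.choose k : ℝ) * (N.choose ℓ : ℝ) * Real.exp (-μ * ((k : ℝ) - (ℓ : ℝ)) ^ 2)
      = ∫ u : ℝ, (Real.exp (-u ^ 2) / Real.sqrt Real.pi) *
          Real.cos (u * Real.sqrt μ) ^ (2 * N) := by
  set s := Real.sqrt μ with hsdef
  have hs : s ^ 2 = μ := Real.sq_sqrt hμ
  have hπ : Real.sqrt π ≠ 0 := ne_of_gt (Real.sqrt_pos.mpr Real.pi_pos)
  have h2N : ((2:ℝ)^(2*N)) ≠ 0 := by positivity
  -- pointwise expansion of the integrand
  have hcos : ∀ u : ℝ, (Real.exp (-u^2) / Real.sqrt π) * Real.cos (u*s) ^ (2*N)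
      = (Real.sqrt π * 2^(2*N))⁻¹ *
        ∑ k ∈ Finset.range (N+1), ∑ ℓ ∈ Finset.range (N+1),
          (N.choose k : ℝ) * (N.choose ℓ : ℝ) *
            (Real.exp (-u^2) * (Real.cos (((2*(k:ℝ)-N)*s)*u) * Real.cos (((2*(ℓ:ℝ)-N)*s)*u))) := by
    intro u
    have hpow : (2:ℝ)^(2*N) * Real.cos (u*s) ^ (2*N) = ((2:ℝ)^N * Real.cos (u*s) ^ N)^2 := by
      rw [mul_pow, ← pow_mul, ← pow_mul, mul_comm N 2]
    have key : (2:ℝ)^(2*N) * Real.cos (u*s) ^ (2*N)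
        = ∑ k ∈ Finset.range (N+1), ∑ ℓ ∈ Finset.range (N+1),
            (N.choose k : ℝ) * (N.choose ℓ : ℝ) *
              (Real.cos (((2*(k:ℝ)-N)*s)*u) * Real.cos (((2*(ℓ:ℝ)-N)*s)*u)) := by
      rw [hpow, two_cos_pow N (u*s), sq, Finset.sum_mul_sum]
      refine Finset.sum_congr rfl fun k _ => Finset.sum_congr rfl fun ℓ _ => ?_
      rw [show (2*(k:ℝ)-N)*(u*s) = ((2*(k:ℝ)-N)*s)*u from by ring,
          show (2*(ℓ:ℝ)-N)*(u*s) = ((2*(ℓ:ℝ)-N)*s)*u from by ring]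
      ring
    calc (Real.exp (-u^2) / Real.sqrt π) * Real.cos (u*s) ^ (2*N)
        = (Real.sqrt π * 2^(2*N))⁻¹ *
            (Real.exp (-u^2) * ((2:ℝ)^(2*N) * Real.cos (u*s) ^ (2*N))) := by
          field_simp
      _ = (Real.sqrt π * 2^(2*N))⁻¹ *
            ∑ k ∈ Finset.range (N+1), ∑ ℓ ∈ Finset.range (N+1),
              (N.choose k : ℝ) * (N.choose ℓ : ℝ) *
                (Real.exp (-u^2) *
                  (Real.cos (((2*(k:ℝ)-N)*s)*u) * Real.cos (((2*(ℓ:ℝ)-N)*s)*u))) := by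
          rw [key, Finset.mul_sum]
          congr 1
          refine Finset.sum_congr rfl fun k _ => ?_
          rw [Finset.mul_sum]
          exact Finset.sum_congr rfl fun ℓ _ => by ring
  -- compute the integral
  have hI : (∫ u : ℝ, (Real.exp (-u^2) / Real.sqrt π) * Real.cos (u*s) ^ (2*N))
      = (Real.sqrt π * 2^(2*N))⁻¹ *
        ∑ k ∈ Finset.range (N+1), ∑ ℓ ∈ Finset.range (N+1),
          (N.choose k : ℝ) * (N.choose ℓ : ℝ) *
            ∫ u : ℝ, Real.exp (-u^2) *
              (Real.cos (((2*(k:ℝ)-N)*s)*u) * Real.cos (((2*(ℓ:ℝ)-N)*s)*u)) := by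
    simp_rw [hcos]
    rw [integral_const_mul]
    congr 1
    rw [integral_finset_sum _ (fun k _ =>
      integrable_finset_sum _ (fun ℓ _ => (gauss_cos_cos_integrable _ _).const_mul _))]
    refine Finset.sum_congr rfl fun k _ => ?_
    rw [integral_finset_sum _ (fun ℓ _ => (gauss_cos_cos_integrable _ _).const_mul _)]
    exact Finset.sum_congr rfl fun ℓ _ => integral_const_mul _ _
  -- value of each integral
  have hval : ∀ k ℓ : ℕ,
      (∫ u : ℝ, Real.exp (-u^2) *
        (Real.cos (((2*(k:ℝ)-N)*s)*u) * Real.cos (((2*(ℓ:ℝ)-N)*s)*u)))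
      = Real.sqrt π * ((Real.exp (-μ*((k:ℝ)-(ℓ:ℝ))^2)
          + Real.exp (-μ*((k:ℝ)+(ℓ:ℝ)-N)^2))/2) := by
    intro k ℓ
    rw [gauss_cos_cos]
    have e1 : -((2*(k:ℝ)-N)*s - (2*(ℓ:ℝ)-N)*s)^2/4 = -μ*((k:ℝ)-(ℓ:ℝ))^2 := by
      linear_combination (-((k:ℝ)-(ℓ:ℝ))^2) * hs
    have e2 : -((2*(k:ℝ)-N)*s + (2*(ℓ:ℝ)-N)*s)^2/4 = -μ*((k:ℝ)+(ℓ:ℝ)-N)^2 := by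
      linear_combination (-((k:ℝ)+(ℓ:ℝ)-N)^2) * hs
    rw [e1, e2]
  -- reflection symmetry of the second sum
  have hsym : (∑ k ∈ Finset.range (N+1), ∑ ℓ ∈ Finset.range (N+1),
        (N.choose k : ℝ) * (N.choose ℓ : ℝ) * Real.exp (-μ*((k:ℝ)+(ℓ:ℝ)-N)^2))
      = ∑ k ∈ Finset.range (N+1), ∑ ℓ ∈ Finset.range (N+1),
        (N.choose k : ℝ) * (N.choose ℓ : ℝ) * Real.exp (-μ*((k:ℝ)-(ℓ:ℝ))^2) := by
    refine Finset.sum_congr rfl fun k _ => ?_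
    rw [← Finset.sum_range_reflect]
    refine Finset.sum_congr rfl fun ℓ hℓ => ?_
    have hℓ' : ℓ ≤ N := Finset.mem_range_succ_iff.mp hℓ
    rw [show N + 1 - 1 - ℓ = N - ℓ from by omega, Nat.choose_symm hℓ', Nat.cast_sub hℓ']
    have : -μ*((k:ℝ)+((N:ℝ)-(ℓ:ℝ))-(N:ℝ))^2 = -μ*((k:ℝ)-(ℓ:ℝ))^2 := by ring
    rw [this]
  rw [hI]
  simp_rw [hval]
  have step : ∀ k ℓ : ℕ, (N.choose k : ℝ) * (N.choose ℓ : ℝ) *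
      (Real.sqrt π * ((Real.exp (-μ*((k:ℝ)-(ℓ:ℝ))^2)
        + Real.exp (-μ*((k:ℝ)+(ℓ:ℝ)-N)^2))/2))
      = (Real.sqrt π/2) * ((N.choose k : ℝ) * (N.choose ℓ : ℝ) *
          Real.exp (-μ*((k:ℝ)-(ℓ:ℝ))^2))
        + (Real.sqrt π/2) * ((N.choose k : ℝ) * (N.choose ℓ : ℝ) *
          Real.exp (-μ*((k:ℝ)+(ℓ:ℝ)-N)^2)) := fun _ _ => by ring
  simp_rw [step, Finset.sum_add_distrib, ← Finset.mul_sum]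
  rw [hsym]
  field_simp
  ring
end

section
/- For every natural number N ≥ 1 and every μ > 0, I₁(μ) := Σ_{k,ℓ=0}^{N} binom(N,k) binom(N,ℓ) (k−ℓ)² e^{-μ(k−ℓ)²} satisfies I₁(μ) = −dI(μ)/dμ = (N · 2^{2N}/√μ) ∫_{-∞}^{+∞} (e^{-u²}/√π) · u · cos^{2N−1}(u√μ) · sin(u√μ) du, where I(μ) = Σ_{k,ℓ=0}^{N} binom(N,k) binom(N,ℓ) e^{-μ(k−ℓ)²}. -/
open MeasureTheory Real Complex Filter

lemma intA (a : ℝ) : Integrable (fun u : ℝ => Real.exp (-u^2) * Real.cos (a*u)) := by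
  apply Integrable.mono' (g := fun u : ℝ => Real.exp (-1 * u^2))
    (integrable_exp_neg_mul_sq (b := 1) one_pos)
  · exact ((Real.continuous_exp.comp (by continuity)).mul
      (Real.continuous_cos.comp (by continuity))).aestronglyMeasurable
  · filter_upwards with u
    rw [norm_mul, Real.norm_eq_abs, Real.norm_eq_abs, abs_of_pos (Real.exp_pos _), neg_one_mul]
    calc Real.exp (-u^2) * |Real.cos (a*u)| ≤ Real.exp (-u^2) * 1 :=
          mul_le_mul_of_nonneg_left (Real.abs_cos_le_one _) (Real.exp_pos _).le
      _ = Real.exp (-u^2) := mul_one _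

lemma intgA (a : ℝ) : ∫ u : ℝ, Real.exp (-u^2) * Real.cos (a*u)
    = Real.sqrt π * Real.exp (-a^2/4) := by
  have h := integral_cexp_quadratic (b := -1) (by norm_num) (Complex.I * a) 0
  have hre : ∀ u : ℝ, ((Complex.exp ((-1) * u^2 + (Complex.I * a) * u + 0)).re)
      = Real.exp (-u^2) * Real.cos (a*u) := by
    intro u
    rw [show ((-1 : ℂ) * u^2 + (Complex.I * a) * u + 0) = (↑(-u^2 : ℝ) + ↑(a*u : ℝ)*Complex.I) by
      push_cast; ring]
    rw [Complex.exp_add, ← Complex.ofReal_exp, Complex.re_ofReal_mul,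
      Complex.exp_ofReal_mul_I_re]
  have hint : Integrable (fun u : ℝ => Complex.exp ((-1) * u^2 + (Complex.I * a) * u + 0)) :=
    integrable_cexp_quadratic' (by norm_num) _ _
  calc ∫ u : ℝ, Real.exp (-u^2) * Real.cos (a*u)
      = ∫ u : ℝ, (Complex.exp ((-1) * u^2 + (Complex.I * a) * u + 0)).re := by simp_rw [hre]
    _ = (∫ u : ℝ, Complex.exp ((-1) * u^2 + (Complex.I * a) * u + 0)).re := integral_re hint
    _ = Real.sqrt π * Real.exp (-a^2/4) := by
        rw [h]
        have h1 : ((π : ℂ) / - -1) ^ (1/2 : ℂ) = (Real.sqrt π : ℂ) := by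
          rw [show ((π:ℂ) / - -1) = ((π:ℝ):ℂ) by norm_num,
            show (1/2 : ℂ) = ((1/2 : ℝ) : ℂ) by norm_num,
            ← Complex.ofReal_cpow Real.pi_pos.le, ← Real.sqrt_eq_rpow]
        have h2 : (0 : ℂ) - (Complex.I * a)^2 / (4 * -1) = ((-a^2/4 : ℝ) : ℂ) := by
          push_cast; rw [mul_pow, Complex.I_sq]; ring
        rw [h1, h2, ← Complex.ofReal_exp, ← Complex.ofReal_mul, Complex.ofReal_re]

lemma intB (a : ℝ) : Integrable (fun u : ℝ => u * Real.exp (-u^2) * Real.sin (a*u)) := by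
  apply Integrable.mono' (g := fun u : ℝ => |u| * Real.exp (-1 * u^2))
    ((integrable_mul_exp_neg_mul_sq (b := 1) one_pos).abs.congr ?_)
  · exact ((continuous_id.mul (Real.continuous_exp.comp (by continuity))).mul
      (Real.continuous_sin.comp (by continuity))).aestronglyMeasurable
  · filter_upwards with u
    rw [norm_mul, norm_mul, Real.norm_eq_abs, Real.norm_eq_abs, Real.norm_eq_abs,
      abs_of_pos (Real.exp_pos _), neg_one_mul]
    calc |u| * Real.exp (-u^2) * |Real.sin (a*u)| ≤ |u| * Real.exp (-u^2) * 1 :=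
          mul_le_mul_of_nonneg_left (Real.abs_sin_le_one _)
            (mul_nonneg (abs_nonneg _) (Real.exp_pos _).le)
      _ = |u| * Real.exp (-u^2) := mul_one _
  · filter_upwards with u
    rw [abs_mul, abs_of_pos (Real.exp_pos _)]

lemma deriv_F (a u : ℝ) : HasDerivAt (fun u : ℝ => -(1/2) * Real.exp (-u^2) * Real.sin (a*u))
    (u * Real.exp (-u^2) * Real.sin (a*u) - (a/2) * (Real.exp (-u^2) * Real.cos (a*u))) u := by
  have h1 : HasDerivAt (fun u : ℝ => Real.exp (-u^2)) (-2*u * Real.exp (-u^2)) u := by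
    have := (((hasDerivAt_id u).pow 2).neg).exp
    convert this using 1 <;> simp [id] <;> ring
  have h2 : HasDerivAt (fun u : ℝ => Real.sin (a*u)) (a * Real.cos (a*u)) u := by
    have := ((hasDerivAt_id u).const_mul a).sin
    convert this using 1 <;> simp [id] <;> ring
  have := ((h1.const_mul (-(1/2) : ℝ)).mul h2)
  exact this.congr_deriv (by ring)

lemma intgB (a : ℝ) : ∫ u : ℝ, u * Real.exp (-u^2) * Real.sin (a*u)
    = a/2 * (Real.sqrt π * Real.exp (-a^2/4)) := by
  have hint : Integrable (fun u : ℝ => u * Real.exp (-u^2) * Real.sin (a*u)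
      - (a/2) * (Real.exp (-u^2) * Real.cos (a*u))) :=
    (intB a).sub ((intA a).const_mul _)
  have key : ∫ u : ℝ, (u * Real.exp (-u^2) * Real.sin (a*u)
      - (a/2) * (Real.exp (-u^2) * Real.cos (a*u))) = 0 := by
    refine tendsto_nhds_unique
      (intervalIntegral_tendsto_integral hint tendsto_neg_atTop_atBot tendsto_id) ?_
    have heq : ∀ T : ℝ, (∫ u in (-T)..T, (u * Real.exp (-u^2) * Real.sin (a*u)
        - (a/2) * (Real.exp (-u^2) * Real.cos (a*u))))
        = -(1/2) * Real.exp (-T^2) * Real.sin (a*T)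
          - (-(1/2) * Real.exp (-(-T)^2) * Real.sin (a*(-T))) := by
      intro T
      exact intervalIntegral.integral_eq_sub_of_hasDerivAt (fun x _ => deriv_F a x)
        hint.intervalIntegrable
    refine Tendsto.congr (fun T => (heq T).symm) ?_
    have hlim : Tendsto (fun T : ℝ => -(1/2) * Real.exp (-T^2) * Real.sin (a*T)) atTop (nhds 0) := by
      apply squeeze_zero_norm (a := fun T : ℝ => (1/2) * Real.exp (-T^2))
      · intro T
        rw [norm_mul, norm_mul, Real.norm_eq_abs, Real.norm_eq_abs, Real.norm_eq_abs,
          abs_of_pos (Real.exp_pos _)]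
        calc |(-(1/2):ℝ)| * Real.exp (-T^2) * |Real.sin (a*T)|
            ≤ |(-(1/2):ℝ)| * Real.exp (-T^2) * 1 := mul_le_mul_of_nonneg_left
              (Real.abs_sin_le_one _) (mul_nonneg (abs_nonneg _) (Real.exp_pos _).le)
          _ = (1/2) * Real.exp (-T^2) := by rw [mul_one]; norm_num
      · have : Tendsto (fun T : ℝ => -T^2) atTop atBot := by
          apply tendsto_neg_atBot_iff.mpr
          exact tendsto_pow_atTop (by norm_num)
        simpa using (Real.tendsto_exp_atBot.comp this).const_mul (1/2 : ℝ)
    have hlim2 : Tendsto (fun T : ℝ => -(1/2) * Real.exp (-(-T)^2) * Real.sin (a*(-T)))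
        atTop (nhds 0) := by
      have := hlim.neg
      simp only [neg_zero] at this
      refine Tendsto.congr (fun T => ?_) this
      simp only [neg_sq, mul_neg, Real.sin_neg]
    simpa using hlim.sub hlim2
  have := integral_sub (intB a) ((intA a).const_mul (a/2))
  rw [this] at key
  rw [sub_eq_zero] at key
  rw [key, integral_const_mul, intgA]


lemma one_add_exp (x : ℝ) :
    Complex.exp (2*x*Complex.I) + 1 = 2 * Complex.cos x * Complex.exp (x*Complex.I) := by
  have e2 : Complex.exp (2*x*Complex.I)
      = Complex.exp (x*Complex.I) * Complex.exp (x*Complex.I) := by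
    rw [← Complex.exp_add]; ring_nf
  have h1 : Complex.exp (-(x:ℂ)*Complex.I) * Complex.exp ((x:ℂ)*Complex.I) = 1 := by
    rw [← Complex.exp_add]; ring_nf; exact Complex.exp_zero
  rw [e2, Complex.cos]
  linear_combination -h1

lemma Z1 (N : ℕ) (x : ℝ) :
    ∑ k ∈ Finset.range (N+1), (N.choose k : ℂ) * Complex.exp (2*k*x*Complex.I)
      = 2^N * (Complex.cos x)^N * Complex.exp (N*x*Complex.I) := by
  have hz : ∀ k : ℕ, Complex.exp (2*k*x*Complex.I) = (Complex.exp (2*x*Complex.I))^k := by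
    intro k; rw [← Complex.exp_nat_mul]; ring_nf
  calc ∑ k ∈ Finset.range (N+1), (N.choose k : ℂ) * Complex.exp (2*k*x*Complex.I)
      = ∑ k ∈ Finset.range (N+1),
          (Complex.exp (2*x*Complex.I))^k * 1^(N-k) * (N.choose k : ℂ) := by
        refine Finset.sum_congr rfl fun k _ => ?_
        rw [hz k, one_pow, mul_one, mul_comm]
    _ = (Complex.exp (2*x*Complex.I) + 1)^N := (add_pow _ _ _).symm
    _ = 2^N * (Complex.cos x)^N * Complex.exp (N*x*Complex.I) := by
        rw [one_add_exp, mul_pow, mul_pow, ← Complex.exp_nat_mul]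
        ring_nf

lemma Z2 (N : ℕ) (hN : 1 ≤ N) (x : ℝ) :
    ∑ k ∈ Finset.range (N+1), (k : ℂ) * (N.choose k : ℂ) * Complex.exp (2*k*x*Complex.I)
      = N * 2^(N-1) * (Complex.cos x)^(N-1) * Complex.exp ((N+1)*x*Complex.I) := by
  obtain ⟨M, rfl⟩ : ∃ M, N = M + 1 := ⟨N - 1, (Nat.succ_pred_eq_of_pos hN).symm⟩
  have key : ∀ k : ℕ, ((k+1 : ℕ) : ℂ) * ((M+1).choose (k+1) : ℂ) = (M+1) * (M.choose k : ℂ) := by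
    intro k
    have h2 : ((k+1) * ((M+1).choose (k+1)) : ℕ) = ((M+1) * M.choose k : ℕ) := by
      rw [mul_comm]
      simpa [Nat.succ_eq_add_one] using (Nat.add_one_mul_choose_eq M k).symm
    exact_mod_cast h2
  rw [Finset.sum_range_succ'
    (fun k => (k : ℂ) * ((M+1).choose k : ℂ) * Complex.exp (2*k*x*Complex.I)) (M+1)]
  simp only [Nat.cast_zero, zero_mul, add_zero]
  have step : ∀ k ∈ Finset.range (M+1),
      ((k+1 : ℕ) : ℂ) * ((M+1).choose (k+1) : ℂ) * Complex.exp (2*((k+1:ℕ):ℂ)*x*Complex.I)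
      = ((M+1:ℕ):ℂ) * Complex.exp (2*x*Complex.I)
          * ((M.choose k : ℂ) * Complex.exp (2*(k:ℂ)*x*Complex.I)) := by
    intro k _
    rw [show Complex.exp (2*((k+1:ℕ):ℂ)*x*Complex.I)
        = Complex.exp (2*x*Complex.I) * Complex.exp (2*(k:ℂ)*x*Complex.I) by
      rw [← Complex.exp_add]; push_cast; ring_nf]
    push_cast
    rw [show ((k:ℂ)+1) * ((M+1).choose (k+1) : ℂ) = (M+1) * (M.choose k : ℂ) by
      have := key k; push_cast at this; linear_combination this]
    ring
  rw [Finset.sum_congr rfl step, ← Finset.mul_sum, Z1 M x]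
  have he : Complex.exp (2*x*Complex.I) * Complex.exp ((M:ℂ)*x*Complex.I)
      = Complex.exp (((((M+1):ℕ):ℂ)+1)*x*Complex.I) := by
    rw [← Complex.exp_add]; push_cast; ring_nf
  rw [Nat.add_sub_cancel]
  linear_combination (((M+1:ℕ):ℂ) * 2^M * Complex.cos x ^ M) * he

lemma hre (c θ : ℝ) : ((c:ℂ) * Complex.exp ((θ:ℂ)*Complex.I)).re = c * Real.cos θ := by
  rw [Complex.re_ofReal_mul, Complex.exp_ofReal_mul_I_re]
lemma him (c θ : ℝ) : ((c:ℂ) * Complex.exp ((θ:ℂ)*Complex.I)).im = c * Real.sin θ := by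
  rw [Complex.im_ofReal_mul, Complex.exp_ofReal_mul_I_im]


lemma L1 (N : ℕ) (x : ℝ) :
    ∑ k ∈ Finset.range (N+1), (N.choose k : ℝ) * Real.cos (2*k*x)
      = 2^N * Real.cos x ^ N * Real.cos (N*x) := by
  have h := congrArg Complex.re (Z1 N x)
  rw [Complex.re_sum] at h
  rw [show ((2:ℂ)^N * (Complex.cos x)^N * Complex.exp (N*x*Complex.I))
      = ((2^N * Real.cos x ^ N : ℝ):ℂ) * Complex.exp (((N*x:ℝ):ℂ)*Complex.I) by
    rw [← Complex.ofReal_cos]; push_cast; ring_nf] at h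
  rw [hre] at h
  rw [← h]
  refine Finset.sum_congr rfl fun k _ => ?_
  rw [show ((N.choose k : ℕ):ℂ) * Complex.exp (2*k*x*Complex.I)
      = (((N.choose k : ℕ):ℝ):ℂ) * Complex.exp (((2*(k:ℝ)*x:ℝ):ℂ)*Complex.I) by
    push_cast; ring_nf, hre]

lemma L2 (N : ℕ) (x : ℝ) :
    ∑ k ∈ Finset.range (N+1), (N.choose k : ℝ) * Real.sin (2*k*x)
      = 2^N * Real.cos x ^ N * Real.sin (N*x) := by
  have h := congrArg Complex.im (Z1 N x)
  rw [Complex.im_sum] at h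
  rw [show ((2:ℂ)^N * (Complex.cos x)^N * Complex.exp (N*x*Complex.I))
      = ((2^N * Real.cos x ^ N : ℝ):ℂ) * Complex.exp (((N*x:ℝ):ℂ)*Complex.I) by
    rw [← Complex.ofReal_cos]; push_cast; ring_nf] at h
  rw [him] at h
  rw [← h]
  refine Finset.sum_congr rfl fun k _ => ?_
  rw [show ((N.choose k : ℕ):ℂ) * Complex.exp (2*k*x*Complex.I)
      = (((N.choose k : ℕ):ℝ):ℂ) * Complex.exp (((2*(k:ℝ)*x:ℝ):ℂ)*Complex.I) by
    push_cast; ring_nf, him]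

lemma L3 (N : ℕ) (hN : 1 ≤ N) (x : ℝ) :
    ∑ k ∈ Finset.range (N+1), (k:ℝ) * (N.choose k : ℝ) * Real.cos (2*k*x)
      = N * 2^(N-1) * Real.cos x ^ (N-1) * Real.cos ((N+1)*x) := by
  have h := congrArg Complex.re (Z2 N hN x)
  rw [Complex.re_sum] at h
  rw [show ((N:ℂ) * 2^(N-1) * (Complex.cos x)^(N-1) * Complex.exp ((N+1)*x*Complex.I))
      = (((N:ℝ) * 2^(N-1) * Real.cos x ^ (N-1) : ℝ):ℂ)
          * Complex.exp ((((N+1)*x:ℝ):ℂ)*Complex.I) by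
    rw [← Complex.ofReal_cos]; push_cast; ring_nf] at h
  rw [hre] at h
  rw [← h]
  refine Finset.sum_congr rfl fun k _ => ?_
  rw [show ((k:ℂ) * (N.choose k : ℂ) * Complex.exp (2*k*x*Complex.I))
      = (((k:ℝ) * (N.choose k : ℝ) : ℝ):ℂ) * Complex.exp (((2*k*x:ℝ):ℂ)*Complex.I) by
    push_cast; ring_nf, hre]

lemma L4 (N : ℕ) (hN : 1 ≤ N) (x : ℝ) :
    ∑ k ∈ Finset.range (N+1), (k:ℝ) * (N.choose k : ℝ) * Real.sin (2*k*x)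
      = N * 2^(N-1) * Real.cos x ^ (N-1) * Real.sin ((N+1)*x) := by
  have h := congrArg Complex.im (Z2 N hN x)
  rw [Complex.im_sum] at h
  rw [show ((N:ℂ) * 2^(N-1) * (Complex.cos x)^(N-1) * Complex.exp ((N+1)*x*Complex.I))
      = (((N:ℝ) * 2^(N-1) * Real.cos x ^ (N-1) : ℝ):ℂ)
          * Complex.exp ((((N+1)*x:ℝ):ℂ)*Complex.I) by
    rw [← Complex.ofReal_cos]; push_cast; ring_nf] at h
  rw [him] at h
  rw [← h]
  refine Finset.sum_congr rfl fun k _ => ?_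
  rw [show ((k:ℂ) * (N.choose k : ℂ) * Complex.exp (2*k*x*Complex.I))
      = (((k:ℝ) * (N.choose k : ℝ) : ℝ):ℂ) * Complex.exp (((2*k*x:ℝ):ℂ)*Complex.I) by
    push_cast; ring_nf, him]

lemma Tkey (N : ℕ) (hN : 1 ≤ N) (x : ℝ) :
    ∑ k ∈ Finset.range (N+1), ∑ ℓ ∈ Finset.range (N+1),
      (N.choose k : ℝ) * (N.choose ℓ : ℝ) * ((k:ℝ) - (ℓ:ℝ)) * Real.sin (2*((k:ℝ)-(ℓ:ℝ))*x)
    = (N:ℝ) * 2^(2*N) * Real.cos x ^ (2*N-1) * Real.sin x := by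
  have expand : ∀ k ∈ Finset.range (N+1), ∀ ℓ ∈ Finset.range (N+1),
      (N.choose k : ℝ) * (N.choose ℓ : ℝ) * ((k:ℝ) - (ℓ:ℝ)) * Real.sin (2*((k:ℝ)-(ℓ:ℝ))*x)
      = ((k:ℝ) * (N.choose k : ℝ) * Real.sin (2*k*x)) * ((N.choose ℓ : ℝ) * Real.cos (2*ℓ*x))
        - ((N.choose k : ℝ) * Real.sin (2*k*x)) * ((ℓ:ℝ) * (N.choose ℓ : ℝ) * Real.cos (2*ℓ*x))
        - ((k:ℝ) * (N.choose k : ℝ) * Real.cos (2*k*x)) * ((N.choose ℓ : ℝ) * Real.sin (2*ℓ*x))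
        + ((N.choose k : ℝ) * Real.cos (2*k*x)) * ((ℓ:ℝ) * (N.choose ℓ : ℝ) * Real.sin (2*ℓ*x)) := by
    intro k _ ℓ _
    rw [show (2*((k:ℝ)-(ℓ:ℝ))*x) = 2*(k:ℝ)*x - 2*(ℓ:ℝ)*x by ring, Real.sin_sub]
    ring
  calc ∑ k ∈ Finset.range (N+1), ∑ ℓ ∈ Finset.range (N+1),
      (N.choose k : ℝ) * (N.choose ℓ : ℝ) * ((k:ℝ) - (ℓ:ℝ)) * Real.sin (2*((k:ℝ)-(ℓ:ℝ))*x)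
      = (∑ k ∈ Finset.range (N+1), (k:ℝ) * (N.choose k : ℝ) * Real.sin (2*k*x))
          * (∑ ℓ ∈ Finset.range (N+1), (N.choose ℓ : ℝ) * Real.cos (2*ℓ*x))
        - (∑ k ∈ Finset.range (N+1), (N.choose k : ℝ) * Real.sin (2*k*x))
          * (∑ ℓ ∈ Finset.range (N+1), (ℓ:ℝ) * (N.choose ℓ : ℝ) * Real.cos (2*ℓ*x))
        - (∑ k ∈ Finset.range (N+1), (k:ℝ) * (N.choose k : ℝ) * Real.cos (2*k*x))
          * (∑ ℓ ∈ Finset.range (N+1), (N.choose ℓ : ℝ) * Real.sin (2*ℓ*x))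
        + (∑ k ∈ Finset.range (N+1), (N.choose k : ℝ) * Real.cos (2*k*x))
          * (∑ ℓ ∈ Finset.range (N+1), (ℓ:ℝ) * (N.choose ℓ : ℝ) * Real.sin (2*ℓ*x)) := by
        rw [Finset.sum_mul_sum, Finset.sum_mul_sum, Finset.sum_mul_sum, Finset.sum_mul_sum,
          ← Finset.sum_sub_distrib, ← Finset.sum_sub_distrib, ← Finset.sum_add_distrib]
        refine Finset.sum_congr rfl fun k hk => ?_
        rw [← Finset.sum_sub_distrib, ← Finset.sum_sub_distrib, ← Finset.sum_add_distrib]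
        exact Finset.sum_congr rfl fun ℓ hℓ => expand k hk ℓ hℓ
    _ = (N:ℝ) * 2^(2*N) * Real.cos x ^ (2*N-1) * Real.sin x := by
        rw [L1, L2, L3 N hN, L4 N hN]
        rw [show ((N:ℝ)+1)*x = (N:ℝ)*x + x by ring]
        rw [Real.sin_add, Real.cos_add]
        have hpow : Real.cos x ^ (N-1) * Real.cos x ^ N = Real.cos x ^ (2*N-1) := by
          rw [← pow_add]
          congr 1
          omega
        have h2 : (2:ℝ)^(N-1) * 2^N = 2^(2*N-1) := by
          rw [← pow_add]; congr 1; omega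
        have h22 : (2:ℝ)^(2*N-1) * 2 = 2^(2*N) := by
          rw [← pow_succ]; congr 1; omega
        linear_combination
          ((N:ℝ) * 2^(N-1) * 2^N * Real.cos x^(N-1) * Real.cos x^N * 2 * Real.sin x)
              * Real.sin_sq_add_cos_sq ((N:ℝ)*x)
            + (2*(N:ℝ)*2^(N-1)*(2:ℝ)^N*Real.sin x) * hpow
            + (2*(N:ℝ)*Real.cos x^(2*N-1)*Real.sin x) * h2
            + ((N:ℝ)*Real.cos x^(2*N-1)*Real.sin x) * h22

/-- For `N ≥ 1` and `μ > 0`, the sum `I₁(μ) = Σ_{k,ℓ} C(N,k) C(N,ℓ) (k-ℓ)² e^{-μ(k-ℓ)²}`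
equals `-dI(μ)/dμ` for `I(μ) = Σ_{k,ℓ} C(N,k) C(N,ℓ) e^{-μ(k-ℓ)²}`, and admits the integral
representation `I₁(μ) = (N·2^{2N}/√μ) ∫ℝ (e^{-u²}/√π) u cos^{2N-1}(u√μ) sin(u√μ) du`. -/
theorem first_derivative_of_purity_sum (N : ℕ) (hN : 1 ≤ N) (μ : ℝ) (hμ : 0 < μ) :
    let I : ℝ → ℝ := fun m =>
      ∑ k ∈ Finset.range (N + 1), ∑ ℓ ∈ Finset.range (N + 1),
        (N.choose k : ℝ) * (N.choose ℓ : ℝ) * Real.exp (-m * ((k : ℝ) - (ℓ : ℝ)) ^ 2)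
    let I₁ : ℝ :=
      ∑ k ∈ Finset.range (N + 1), ∑ ℓ ∈ Finset.range (N + 1),
        (N.choose k : ℝ) * (N.choose ℓ : ℝ) * ((k : ℝ) - (ℓ : ℝ)) ^ 2 *
          Real.exp (-μ * ((k : ℝ) - (ℓ : ℝ)) ^ 2)
    HasDerivAt I (-I₁) μ ∧
    I₁ = ((N : ℝ) * 2 ^ (2 * N) / Real.sqrt μ) *
        ∫ u : ℝ, (Real.exp (-u ^ 2) / Real.sqrt Real.pi) * u *
          Real.cos (u * Real.sqrt μ) ^ (2 * N - 1) * Real.sin (u * Real.sqrt μ) := by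
  intro I I₁
  constructor
  · -- derivative part
    have hterm : ∀ k ℓ : ℕ, HasDerivAt
        (fun m : ℝ => (N.choose k : ℝ) * (N.choose ℓ : ℝ) * Real.exp (-m * ((k:ℝ) - ℓ) ^ 2))
        (-((N.choose k : ℝ) * (N.choose ℓ : ℝ) * ((k:ℝ) - ℓ) ^ 2 *
          Real.exp (-μ * ((k:ℝ) - ℓ) ^ 2))) μ := by
      intro k ℓ
      have h1 : HasDerivAt (fun m : ℝ => -m * ((k:ℝ) - ℓ) ^ 2) (-((k:ℝ) - ℓ) ^ 2) μ := by
        have := ((hasDerivAt_id μ).neg.mul_const (((k:ℝ) - ℓ) ^ 2))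
        simpa using this
      have := (h1.exp.const_mul ((N.choose k : ℝ) * (N.choose ℓ : ℝ)))
      exact this.congr_deriv (by ring)
    have hsum : HasDerivAt I
        (∑ k ∈ Finset.range (N + 1), ∑ ℓ ∈ Finset.range (N + 1),
          -((N.choose k : ℝ) * (N.choose ℓ : ℝ) * ((k:ℝ) - ℓ) ^ 2 *
            Real.exp (-μ * ((k:ℝ) - ℓ) ^ 2))) μ := by
      exact HasDerivAt.fun_sum fun k _ => HasDerivAt.fun_sum fun ℓ _ => hterm k ℓ
    convert hsum using 1
    simp [I₁, Finset.sum_neg_distrib]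
  · -- integral representation
    set s : ℝ := Real.sqrt μ with hs_def
    have hs : 0 < s := Real.sqrt_pos.mpr hμ
    have hs2 : s ^ 2 = μ := Real.sq_sqrt hμ.le
    have hπ : Real.sqrt Real.pi ≠ 0 := by
      positivity
    set J : ℝ := ∫ u : ℝ, (Real.exp (-u ^ 2) / Real.sqrt Real.pi) * u *
        Real.cos (u * s) ^ (2 * N - 1) * Real.sin (u * s) with hJ
    have hint : ∀ k ℓ : ℕ, Integrable (fun u : ℝ =>
        ((N.choose k : ℝ) * (N.choose ℓ : ℝ) * ((k:ℝ) - ℓ) / Real.sqrt Real.pi) *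
          (u * Real.exp (-u ^ 2) * Real.sin ((2 * ((k:ℝ) - ℓ) * s) * u))) := by
      intro k ℓ
      have h := intB (2 * ((k:ℝ) - ℓ) * s)
      simpa [pow_two] using h.const_mul
        ((N.choose k : ℝ) * (N.choose ℓ : ℝ) * ((k:ℝ) - ℓ) / Real.sqrt Real.pi)
    have hkey : ((N : ℝ) * 2 ^ (2 * N)) * J
        = ∑ k ∈ Finset.range (N + 1), ∑ ℓ ∈ Finset.range (N + 1),
            ((N.choose k : ℝ) * (N.choose ℓ : ℝ) * ((k:ℝ) - ℓ) / Real.sqrt Real.pi) *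
              ∫ u : ℝ, u * Real.exp (-u ^ 2) * Real.sin ((2 * ((k:ℝ) - ℓ) * s) * u) := by
      rw [hJ, ← integral_const_mul]
      have hptw : ∀ u : ℝ,
          ((N : ℝ) * 2 ^ (2 * N)) * ((Real.exp (-u ^ 2) / Real.sqrt Real.pi) * u *
            Real.cos (u * s) ^ (2 * N - 1) * Real.sin (u * s))
          = ∑ k ∈ Finset.range (N + 1), ∑ ℓ ∈ Finset.range (N + 1),
              ((N.choose k : ℝ) * (N.choose ℓ : ℝ) * ((k:ℝ) - ℓ) / Real.sqrt Real.pi) *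
                (u * Real.exp (-u ^ 2) * Real.sin ((2 * ((k:ℝ) - ℓ) * s) * u)) := by
        intro u
        have hT := Tkey N hN (u * s)
        calc ((N : ℝ) * 2 ^ (2 * N)) * ((Real.exp (-u ^ 2) / Real.sqrt Real.pi) * u *
              Real.cos (u * s) ^ (2 * N - 1) * Real.sin (u * s))
            = ((Real.exp (-u ^ 2) / Real.sqrt Real.pi) * u) *
              ((N : ℝ) * 2 ^ (2 * N) * Real.cos (u * s) ^ (2 * N - 1) * Real.sin (u * s)) := by
              ring
          _ = ((Real.exp (-u ^ 2) / Real.sqrt Real.pi) * u) *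
              ∑ k ∈ Finset.range (N + 1), ∑ ℓ ∈ Finset.range (N + 1),
                (N.choose k : ℝ) * (N.choose ℓ : ℝ) * ((k:ℝ) - ℓ) *
                  Real.sin (2 * ((k:ℝ) - ℓ) * (u * s)) := by rw [hT]
          _ = _ := by
              rw [Finset.mul_sum]
              refine Finset.sum_congr rfl fun k _ => ?_
              rw [Finset.mul_sum]
              refine Finset.sum_congr rfl fun ℓ _ => ?_
              rw [show 2 * ((k:ℝ) - ℓ) * (u * s) = (2 * ((k:ℝ) - ℓ) * s) * u by ring]
              ring
      rw [integral_congr_ae (Filter.Eventually.of_forall hptw)]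
      rw [integral_finset_sum _ fun k _ => integrable_finset_sum _ fun ℓ _ => hint k ℓ]
      refine Finset.sum_congr rfl fun k _ => ?_
      rw [integral_finset_sum _ fun ℓ _ => hint k ℓ]
      refine Finset.sum_congr rfl fun ℓ _ => ?_
      rw [integral_const_mul]
    have hval : ∀ k ℓ : ℕ,
        ((N.choose k : ℝ) * (N.choose ℓ : ℝ) * ((k:ℝ) - ℓ) / Real.sqrt Real.pi) *
          ∫ u : ℝ, u * Real.exp (-u ^ 2) * Real.sin ((2 * ((k:ℝ) - ℓ) * s) * u)
        = s * ((N.choose k : ℝ) * (N.choose ℓ : ℝ) * ((k:ℝ) - ℓ) ^ 2 *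
            Real.exp (-μ * ((k:ℝ) - ℓ) ^ 2)) := by
      intro k ℓ
      have hB := intgB (2 * ((k:ℝ) - ℓ) * s)
      simp only [pow_two] at hB ⊢
      rw [hB]
      have hμs : s * s = μ := Real.mul_self_sqrt hμ.le
      rw [show -(2 * ((k:ℝ) - ℓ) * s * (2 * ((k:ℝ) - ℓ) * s)) / 4
          = -μ * (((k:ℝ) - ℓ) * ((k:ℝ) - ℓ)) by rw [← hμs]; ring]
      field_simp
    have hkey2 : ((N : ℝ) * 2 ^ (2 * N)) * J = s * I₁ := by
      rw [hkey, Finset.mul_sum]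
      refine Finset.sum_congr rfl fun k _ => ?_
      rw [Finset.mul_sum]
      exact Finset.sum_congr rfl fun ℓ _ => hval k ℓ
    rw [div_mul_eq_mul_div, hkey2, mul_comm s, mul_div_assoc, div_self hs.ne', mul_one]
end

section
/- For every natural number N ≥ 1 and every μ > 0, I₂(μ) := Σ_{k,ℓ=0}^{N} binom(N,k) binom(N,ℓ) (k−ℓ)⁴ e^{-μ(k−ℓ)²} satisfies I₂(μ) = d²I(μ)/dμ² = (N·2^{2N}/(2μ√μ)) ∫_{-∞}^{+∞} (e^{-u²}/√π) u cos^{2N−1}(u√μ) sin(u√μ) du + (N(2N−1)·2^{2N}/(2μ)) ∫_{-∞}^{+∞} (e^{-u²}/√π) u² cos^{2N−2}(u√μ) sin²(u√μ) du − (N·2^{2N}/(2μ)) ∫_{-∞}^{+∞} (e^{-u²}/√π) u² cos^{2N}(u√μ) du, where I(μ) = Σ_{k,ℓ=0}^{N} binom(N,k) binom(N,ℓ) e^{-μ(k−ℓ)²}. -/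
open MeasureTheory

namespace PuritySum

open Real Finset

lemma int_pow (k : ℕ) : Integrable (fun u : ℝ => |u| ^ k * Real.exp (-u ^ 2)) := by
  have h := integrable_rpow_mul_exp_neg_mul_sq (b := 1) one_pos (s := (k : ℝ)) (lt_of_lt_of_le neg_one_lt_zero (Nat.cast_nonneg k))
  have h2 : Integrable (fun u : ℝ => u ^ k * Real.exp (-u ^ 2)) := by
    simpa [Real.rpow_natCast] using h
  have := h2.abs
  refine this.congr ?_
  filter_upwards with u
  rw [abs_mul, abs_of_nonneg (Real.exp_pos _).le, abs_pow]

lemma integrable_of_le_gauss {f : ℝ → ℝ} (k : ℕ) (hf : Continuous f)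
    (h : ∀ u, |f u| ≤ |u| ^ k * Real.exp (-u ^ 2)) : Integrable f := by
  refine (int_pow k).mono' hf.aestronglyMeasurable ?_
  filter_upwards with u
  simpa [Real.norm_eq_abs] using h u

lemma gauss0 (b : ℝ) :
    ∫ u : ℝ, Real.exp (-u ^ 2) * Real.cos (b * u) = Real.sqrt π * Real.exp (-b ^ 2 / 4) := by
  have key := fourierIntegral_gaussian (b := (1 : ℂ)) (by norm_num) (t := (b : ℂ))
  have hint : Integrable (fun x : ℝ => Complex.exp (Complex.I * b * x) *
      Complex.exp (-1 * (x : ℂ) ^ 2)) := by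
    refine (integrable_exp_neg_mul_sq (b := 1) one_pos).mono' ?_ ?_
    · apply Continuous.aestronglyMeasurable; fun_prop
    · filter_upwards with x
      rw [norm_mul, Complex.norm_exp, Complex.norm_exp]
      simp [Complex.mul_re, ← Complex.ofReal_pow]
  have hre := congrArg Complex.re key
  rw [show (Complex.re : ℂ → ℝ) = RCLike.re by ext z; simp [RCLike.re_to_complex],
    ← integral_re hint] at hre
  simp only [RCLike.re_to_complex] at hre
  have h1 : ∀ x : ℝ, (Complex.exp (Complex.I * b * x) * Complex.exp (-1 * (x : ℂ) ^ 2)).re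
      = Real.exp (-x ^ 2) * Real.cos (b * x) := by
    intro x
    rw [← Complex.exp_add, Complex.exp_re]
    have h2 : (Complex.I * b * x + -1 * (x : ℂ) ^ 2).re = -x ^ 2 := by
      simp [Complex.mul_re, ← Complex.ofReal_pow]
    have h3 : (Complex.I * b * x + -1 * (x : ℂ) ^ 2).im = b * x := by
      simp [Complex.mul_im, ← Complex.ofReal_pow]
    rw [h2, h3]
  have h4 : ((π / 1 : ℂ) ^ (1 / 2 : ℂ) * Complex.exp (-(b : ℂ) ^ 2 / (4 * 1))).re
      = Real.sqrt π * Real.exp (-b ^ 2 / 4) := by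
    have h5 : (π / 1 : ℂ) ^ (1 / 2 : ℂ) = ((Real.sqrt π : ℝ) : ℂ) := by
      rw [div_one, Real.sqrt_eq_rpow, show (1/2 : ℂ) = ((1/2 : ℝ) : ℂ) by norm_num,
        ← Complex.ofReal_cpow Real.pi_pos.le]
    have h6 : Complex.exp (-(b : ℂ) ^ 2 / (4 * 1)) = ((Real.exp (-b ^ 2 / 4) : ℝ) : ℂ) := by
      rw [Complex.ofReal_exp]
      norm_num
    rw [h5, h6, ← Complex.ofReal_mul, Complex.ofReal_re]
  rw [h4] at hre
  rw [← hre]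
  apply integral_congr_ae
  filter_upwards with x
  exact (h1 x).symm

lemma gauss1 (b : ℝ) :
    ∫ u : ℝ, u * Real.exp (-u ^ 2) * Real.sin (b * u)
      = b / 2 * Real.sqrt π * Real.exp (-b ^ 2 / 4) := by
  have main := hasDerivAt_integral_of_dominated_loc_of_deriv_le (μ := volume)
      (F := fun (x : ℝ) (a : ℝ) => Real.exp (-a ^ 2) * Real.cos (x * a))
      (F' := fun (x : ℝ) (a : ℝ) => Real.exp (-a ^ 2) * (-Real.sin (x * a) * a))
      (x₀ := b) (bound := fun a => |a| * Real.exp (-a ^ 2)) (s := Metric.ball b 1) (Metric.ball_mem_nhds b one_pos)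
      (Filter.Eventually.of_forall fun x => (Continuous.aestronglyMeasurable (by fun_prop)))
      (integrable_of_le_gauss 0 (by fun_prop) (fun u => by
        rw [abs_mul, abs_of_nonneg (Real.exp_pos _).le, pow_zero, one_mul]
        calc Real.exp (-u ^ 2) * |Real.cos (b * u)| ≤ Real.exp (-u ^ 2) * 1 := by
              gcongr
              exact abs_cos_le_one _
          _ = Real.exp (-u ^ 2) := mul_one _))
      (Continuous.aestronglyMeasurable (by fun_prop))
      (Filter.Eventually.of_forall fun a x _ => by
        rw [Real.norm_eq_abs, abs_mul, abs_mul, abs_neg, abs_of_nonneg (Real.exp_pos _).le]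
        calc Real.exp (-a ^ 2) * (|Real.sin (x * a)| * |a|)
            ≤ Real.exp (-a ^ 2) * (1 * |a|) := by
              gcongr
              exact abs_sin_le_one _
          _ = |a| * Real.exp (-a ^ 2) := by ring)
      (by simpa using int_pow 1)
      (Filter.Eventually.of_forall fun a x _ =>
        ((hasDerivAt_mul_const a).cos).const_mul (Real.exp (-a ^ 2)))
  obtain ⟨-, hD⟩ := main
  have heq : (fun x : ℝ => ∫ a : ℝ, Real.exp (-a ^ 2) * Real.cos (x * a))
      = fun x : ℝ => Real.sqrt π * Real.exp (-x ^ 2 / 4) := funext fun x => gauss0 x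
  rw [heq] at hD
  have hcl : HasDerivAt (fun x : ℝ => Real.sqrt π * Real.exp (-x ^ 2 / 4))
      (Real.sqrt π * (Real.exp (-b ^ 2 / 4) * (-(2 * b) / 4))) b := by
    have h1 : HasDerivAt (fun x : ℝ => -x ^ 2 / 4) (-(2 * b) / 4) b := by
      simpa using ((hasDerivAt_pow 2 b).neg.div_const 4)
    exact (h1.exp).const_mul _
  have huniq := hD.unique hcl
  have hneg : (fun a : ℝ => Real.exp (-a ^ 2) * (-Real.sin (b * a) * a))
      = fun a : ℝ => -(a * Real.exp (-a ^ 2) * Real.sin (b * a)) := by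
    funext a; ring
  rw [hneg, integral_neg] at huniq
  have := neg_eq_iff_eq_neg.mp huniq
  rw [this]; ring

lemma gauss2 (b : ℝ) :
    ∫ u : ℝ, u ^ 2 * Real.exp (-u ^ 2) * Real.cos (b * u)
      = (1 / 2 - b ^ 2 / 4) * Real.sqrt π * Real.exp (-b ^ 2 / 4) := by
  have main := hasDerivAt_integral_of_dominated_loc_of_deriv_le (μ := volume)
      (F := fun (x : ℝ) (a : ℝ) => a * Real.exp (-a ^ 2) * Real.sin (x * a))
      (F' := fun (x : ℝ) (a : ℝ) => a * Real.exp (-a ^ 2) * (Real.cos (x * a) * a))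
      (x₀ := b) (bound := fun a => |a| ^ 2 * Real.exp (-a ^ 2)) (s := Metric.ball b 1) (Metric.ball_mem_nhds b one_pos)
      (Filter.Eventually.of_forall fun x => (Continuous.aestronglyMeasurable (by fun_prop)))
      (integrable_of_le_gauss 1 (by fun_prop) (fun u => by
        rw [abs_mul, abs_mul, abs_of_nonneg (Real.exp_pos _).le, pow_one]
        calc |u| * Real.exp (-u ^ 2) * |Real.sin (b * u)|
            ≤ |u| * Real.exp (-u ^ 2) * 1 := by
              gcongr
              exact abs_sin_le_one _
          _ = |u| * Real.exp (-u ^ 2) := by ring))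
      (Continuous.aestronglyMeasurable (by fun_prop))
      (Filter.Eventually.of_forall fun a x _ => by
        rw [Real.norm_eq_abs, abs_mul, abs_mul, abs_mul, abs_of_nonneg (Real.exp_pos _).le]
        calc |a| * Real.exp (-a ^ 2) * (|Real.cos (x * a)| * |a|)
            ≤ |a| * Real.exp (-a ^ 2) * (1 * |a|) := by
              gcongr
              exact abs_cos_le_one _
          _ = |a| ^ 2 * Real.exp (-a ^ 2) := by ring)
      (int_pow 2)
      (Filter.Eventually.of_forall fun a x _ =>
        ((hasDerivAt_mul_const a).sin).const_mul (a * Real.exp (-a ^ 2)))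
  obtain ⟨-, hD⟩ := main
  have heq : (fun x : ℝ => ∫ a : ℝ, a * Real.exp (-a ^ 2) * Real.sin (x * a))
      = fun x : ℝ => x / 2 * Real.sqrt π * Real.exp (-x ^ 2 / 4) := funext fun x => gauss1 x
  rw [heq] at hD
  have hcl : HasDerivAt (fun x : ℝ => x / 2 * Real.sqrt π * Real.exp (-x ^ 2 / 4))
      ((1 / 2 * Real.sqrt π) * Real.exp (-b ^ 2 / 4)
        + b / 2 * Real.sqrt π * (Real.exp (-b ^ 2 / 4) * (-(2 * b) / 4))) b := by
    have h1 : HasDerivAt (fun x : ℝ => -x ^ 2 / 4) (-(2 * b) / 4) b := by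
      simpa using ((hasDerivAt_pow 2 b).neg.div_const 4)
    have h2 : HasDerivAt (fun x : ℝ => x / 2 * Real.sqrt π) (1 / 2 * Real.sqrt π) b := by
      simpa using ((hasDerivAt_id b).div_const 2).mul_const (Real.sqrt π)
    exact h2.mul h1.exp
  have huniq := hD.unique hcl
  have hcongr : (fun a : ℝ => a * Real.exp (-a ^ 2) * (Real.cos (b * a) * a))
      = fun a : ℝ => a ^ 2 * Real.exp (-a ^ 2) * Real.cos (b * a) := by
    funext a; ring
  rw [hcongr] at huniq
  rw [huniq]; ring

lemma cospow (N : ℕ) (x : ℝ) :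
    (2 : ℝ) ^ (2 * N) * Real.cos x ^ (2 * N) =
    ∑ k ∈ Finset.range (N + 1), ∑ ℓ ∈ Finset.range (N + 1),
      (N.choose k : ℝ) * (N.choose ℓ : ℝ) * Real.cos (2 * ((k : ℝ) - (ℓ : ℝ)) * x) := by
  set z : ℂ := Complex.exp (x * Complex.I) with hz
  set w : ℂ := Complex.exp (-(x * Complex.I)) with hw
  have hcos : ((2 : ℂ) * Real.cos x) = z + w := by
    rw [Complex.ofReal_cos, Complex.cos, hz, hw]
    ring
  have hzw : ∀ a b : ℕ, z ^ a * w ^ b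
      = Complex.exp (((((a : ℝ) - (b : ℝ)) * x : ℝ) : ℂ) * Complex.I) := by
    intro a b
    rw [hz, hw, ← Complex.exp_nat_mul, ← Complex.exp_nat_mul, ← Complex.exp_add]
    congr 1
    push_cast
    ring
  have e1 : (z + w) ^ N = ∑ k ∈ Finset.range (N + 1),
      z ^ k * w ^ (N - k) * (N.choose k : ℂ) := add_pow z w N
  have e2 : (z + w) ^ N = ∑ ℓ ∈ Finset.range (N + 1),
      w ^ ℓ * z ^ (N - ℓ) * (N.choose ℓ : ℂ) := by
    rw [add_comm]; exact add_pow w z N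
  have key : (((2 : ℝ) ^ (2 * N) * Real.cos x ^ (2 * N) : ℝ) : ℂ)
      = ∑ k ∈ Finset.range (N + 1), ∑ ℓ ∈ Finset.range (N + 1),
        ((N.choose k : ℝ) * (N.choose ℓ : ℝ) : ℂ) *
          Complex.exp (((2 * ((k : ℝ) - (ℓ : ℝ)) * x : ℝ) : ℂ) * Complex.I) := by
    calc (((2 : ℝ) ^ (2 * N) * Real.cos x ^ (2 * N) : ℝ) : ℂ)
        = ((2 : ℂ) * (Real.cos x : ℂ)) ^ (N + N) := by
          rw [mul_pow, two_mul]
          push_cast [-Complex.ofReal_cos]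
          ring
      _ = (z + w) ^ N * (z + w) ^ N := by rw [hcos, pow_add]
      _ = (∑ k ∈ Finset.range (N + 1), z ^ k * w ^ (N - k) * (N.choose k : ℂ)) *
          (∑ ℓ ∈ Finset.range (N + 1), w ^ ℓ * z ^ (N - ℓ) * (N.choose ℓ : ℂ)) := by
          rw [← e1, ← e2]
      _ = ∑ k ∈ Finset.range (N + 1), ∑ ℓ ∈ Finset.range (N + 1),
          (z ^ k * w ^ (N - k) * (N.choose k : ℂ)) *
          (w ^ ℓ * z ^ (N - ℓ) * (N.choose ℓ : ℂ)) := by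
          rw [Finset.sum_mul_sum]
      _ = _ := by
          refine Finset.sum_congr rfl fun k hk => Finset.sum_congr rfl fun ℓ hℓ => ?_
          have hkN : k ≤ N := Nat.lt_succ_iff.mp (Finset.mem_range.mp hk)
          have hℓN : ℓ ≤ N := Nat.lt_succ_iff.mp (Finset.mem_range.mp hℓ)
          have h1 := hzw k (N - k)
          have h2 : w ^ ℓ * z ^ (N - ℓ)
              = Complex.exp ((((((N - ℓ : ℕ) : ℝ) - (ℓ : ℝ)) * x : ℝ) : ℂ) * Complex.I) := by
            rw [mul_comm]; exact hzw (N - ℓ) ℓ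
          calc (z ^ k * w ^ (N - k) * (N.choose k : ℂ)) *
              (w ^ ℓ * z ^ (N - ℓ) * (N.choose ℓ : ℂ))
              = (z ^ k * w ^ (N - k)) * (w ^ ℓ * z ^ (N - ℓ))
                * ((N.choose k : ℂ) * (N.choose ℓ : ℂ)) := by ring
            _ = Complex.exp ((((((k : ℝ) - ((N - k : ℕ) : ℝ)) * x : ℝ)) : ℂ) * Complex.I) *
                Complex.exp ((((((N - ℓ : ℕ) : ℝ) - (ℓ : ℝ)) * x : ℝ) : ℂ) * Complex.I)
                * ((N.choose k : ℂ) * (N.choose ℓ : ℂ)) := by rw [h1, h2]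
            _ = _ := by
                rw [← Complex.exp_add,
                  show ((((((k : ℝ) - ((N - k : ℕ) : ℝ)) * x : ℝ)) : ℂ) * Complex.I)
                    + (((((N - ℓ : ℕ) : ℝ) - (ℓ : ℝ)) * x : ℝ) : ℂ) * Complex.I
                    = ((2 * ((k : ℝ) - (ℓ : ℝ)) * x : ℝ) : ℂ) * Complex.I by
                      rw [Nat.cast_sub hkN, Nat.cast_sub hℓN]
                      push_cast
                      ring]
                push_cast
                ring
  have hre := congrArg Complex.re key
  rw [Complex.ofReal_re] at hre
  rw [hre, Complex.re_sum]
  refine Finset.sum_congr rfl fun k _ => ?_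
  rw [Complex.re_sum]
  refine Finset.sum_congr rfl fun ℓ _ => ?_
  simp only [Complex.mul_re, Complex.exp_ofReal_mul_I_re]
  simp

lemma hasDerivAt_cos_lin (c y : ℝ) :
    HasDerivAt (fun t : ℝ => Real.cos (c * t)) (-(c * Real.sin (c * y))) y := by
  simpa [mul_comm] using ((hasDerivAt_id y).const_mul c).cos

lemma hasDerivAt_sin_lin (c y : ℝ) :
    HasDerivAt (fun t : ℝ => Real.sin (c * t)) (c * Real.cos (c * y)) y := by
  simpa [mul_comm] using ((hasDerivAt_id y).const_mul c).sin

lemma cospow' (M : ℕ) (x : ℝ) :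
    (2 : ℝ) ^ (2 * M + 2) * Real.cos x ^ (2 * M + 2) =
    ∑ k ∈ Finset.range (M + 2), ∑ ℓ ∈ Finset.range (M + 2),
      ((M + 1).choose k : ℝ) * ((M + 1).choose ℓ : ℝ)
        * Real.cos (2 * ((k : ℝ) - (ℓ : ℝ)) * x) := by
  have := cospow (M + 1) x
  simpa [show 2 * (M + 1) = 2 * M + 2 by ring, show M + 1 + 1 = M + 2 from rfl] using this

lemma base (M : ℕ) : ∀ x : ℝ,
    ((2 : ℝ) ^ (2 * M + 2) * (2 * (M : ℝ) + 2)) * (Real.cos x ^ (2 * M + 1) * Real.sin x) =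
    ∑ k ∈ Finset.range (M + 2), ∑ ℓ ∈ Finset.range (M + 2),
      ((M + 1).choose k : ℝ) * ((M + 1).choose ℓ : ℝ)
        * (2 * ((k : ℝ) - (ℓ : ℝ)) * Real.sin (2 * ((k : ℝ) - (ℓ : ℝ)) * x)) := by
  intro x
  have hP : HasDerivAt (fun y : ℝ => (2 : ℝ) ^ (2 * M + 2) * Real.cos y ^ (2 * M + 2))
      (-(((2 : ℝ) ^ (2 * M + 2) * (2 * (M : ℝ) + 2)) *
        (Real.cos x ^ (2 * M + 1) * Real.sin x))) x := by
    have h := ((Real.hasDerivAt_cos x).pow (2 * M + 2)).const_mul ((2 : ℝ) ^ (2 * M + 2))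
    refine h.congr_deriv ?_
    have h1 : 2 * M + 2 - 1 = 2 * M + 1 := by omega
    rw [h1]
    push_cast
    ring
  have hQ : HasDerivAt (fun y : ℝ => ∑ k ∈ Finset.range (M + 2), ∑ ℓ ∈ Finset.range (M + 2),
      ((M + 1).choose k : ℝ) * ((M + 1).choose ℓ : ℝ)
        * Real.cos (2 * ((k : ℝ) - (ℓ : ℝ)) * y))
      (∑ k ∈ Finset.range (M + 2), ∑ ℓ ∈ Finset.range (M + 2),
        ((M + 1).choose k : ℝ) * ((M + 1).choose ℓ : ℝ)
          * (-(2 * ((k : ℝ) - (ℓ : ℝ)) * Real.sin (2 * ((k : ℝ) - (ℓ : ℝ)) * x)))) x := by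
    refine HasDerivAt.fun_sum fun k _ => HasDerivAt.fun_sum fun ℓ _ => ?_
    exact (hasDerivAt_cos_lin (2 * ((k : ℝ) - (ℓ : ℝ))) x).const_mul _
  have hfun : (fun y : ℝ => (2 : ℝ) ^ (2 * M + 2) * Real.cos y ^ (2 * M + 2))
      = (fun y : ℝ => ∑ k ∈ Finset.range (M + 2), ∑ ℓ ∈ Finset.range (M + 2),
        ((M + 1).choose k : ℝ) * ((M + 1).choose ℓ : ℝ)
          * Real.cos (2 * ((k : ℝ) - (ℓ : ℝ)) * y)) := funext fun y => cospow' M y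
  rw [hfun] at hP
  have huniq := hP.unique hQ
  have hsum : (∑ k ∈ Finset.range (M + 2), ∑ ℓ ∈ Finset.range (M + 2),
      ((M + 1).choose k : ℝ) * ((M + 1).choose ℓ : ℝ)
        * (-(2 * ((k : ℝ) - (ℓ : ℝ)) * Real.sin (2 * ((k : ℝ) - (ℓ : ℝ)) * x))))
      = -(∑ k ∈ Finset.range (M + 2), ∑ ℓ ∈ Finset.range (M + 2),
      ((M + 1).choose k : ℝ) * ((M + 1).choose ℓ : ℝ)
        * (2 * ((k : ℝ) - (ℓ : ℝ)) * Real.sin (2 * ((k : ℝ) - (ℓ : ℝ)) * x))) := by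
    rw [← Finset.sum_neg_distrib]
    refine Finset.sum_congr rfl fun k _ => ?_
    rw [← Finset.sum_neg_distrib]
    exact Finset.sum_congr rfl fun ℓ _ => by ring
  rw [hsum] at huniq
  linarith [huniq]

lemma D1 (M : ℕ) (x : ℝ) :
    Real.cos x ^ (2 * M + 1) * Real.sin x =
    (∑ k ∈ Finset.range (M + 2), ∑ ℓ ∈ Finset.range (M + 2),
      ((M + 1).choose k : ℝ) * ((M + 1).choose ℓ : ℝ)
        * (((k : ℝ) - (ℓ : ℝ)) * Real.sin (2 * ((k : ℝ) - (ℓ : ℝ)) * x)))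
      / ((2 : ℝ) ^ (2 * M + 2) * ((M : ℝ) + 1)) := by
  have h := base M x
  have hsum : (∑ k ∈ Finset.range (M + 2), ∑ ℓ ∈ Finset.range (M + 2),
      ((M + 1).choose k : ℝ) * ((M + 1).choose ℓ : ℝ)
        * (2 * ((k : ℝ) - (ℓ : ℝ)) * Real.sin (2 * ((k : ℝ) - (ℓ : ℝ)) * x)))
      = 2 * (∑ k ∈ Finset.range (M + 2), ∑ ℓ ∈ Finset.range (M + 2),
      ((M + 1).choose k : ℝ) * ((M + 1).choose ℓ : ℝ)
        * (((k : ℝ) - (ℓ : ℝ)) * Real.sin (2 * ((k : ℝ) - (ℓ : ℝ)) * x))) := by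
    rw [Finset.mul_sum]
    refine Finset.sum_congr rfl fun k _ => ?_
    rw [Finset.mul_sum]
    exact Finset.sum_congr rfl fun ℓ _ => by ring
  rw [hsum] at h
  have hne : (2 : ℝ) ^ (2 * M + 2) * ((M : ℝ) + 1) ≠ 0 := by positivity
  rw [eq_div_iff hne]
  linear_combination (1 / 2 : ℝ) * h

lemma D2 (M : ℕ) (x : ℝ) :
    Real.cos x ^ (2 * M) * Real.sin x ^ 2 =
    (Real.cos x ^ (2 * M + 2) -
      (∑ k ∈ Finset.range (M + 2), ∑ ℓ ∈ Finset.range (M + 2),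
        ((M + 1).choose k : ℝ) * ((M + 1).choose ℓ : ℝ)
          * (((k : ℝ) - (ℓ : ℝ)) ^ 2 * Real.cos (2 * ((k : ℝ) - (ℓ : ℝ)) * x)))
        / ((2 : ℝ) ^ (2 * M + 1) * ((M : ℝ) + 1)))
      / (2 * (M : ℝ) + 1) := by
  have hL : HasDerivAt (fun y : ℝ => ((2 : ℝ) ^ (2 * M + 2) * (2 * (M : ℝ) + 2)) *
      (Real.cos y ^ (2 * M + 1) * Real.sin y))
      (((2 : ℝ) ^ (2 * M + 2) * (2 * (M : ℝ) + 2)) *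
        ((2 * (M : ℝ) + 1) * Real.cos x ^ (2 * M) * (-Real.sin x) * Real.sin x
          + Real.cos x ^ (2 * M + 1) * Real.cos x)) x := by
    have hpow : HasDerivAt (fun y : ℝ => Real.cos y ^ (2 * M + 1))
        ((2 * (M : ℝ) + 1) * Real.cos x ^ (2 * M) * (-Real.sin x)) x := by
      have h := (Real.hasDerivAt_cos x).pow (2 * M + 1)
      refine h.congr_deriv ?_
      have h1 : 2 * M + 1 - 1 = 2 * M := by omega
      rw [h1]
      push_cast
      ring
    exact (hpow.mul (Real.hasDerivAt_sin x)).const_mul _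
  have hR : HasDerivAt (fun y : ℝ => ∑ k ∈ Finset.range (M + 2), ∑ ℓ ∈ Finset.range (M + 2),
      ((M + 1).choose k : ℝ) * ((M + 1).choose ℓ : ℝ)
        * (2 * ((k : ℝ) - (ℓ : ℝ)) * Real.sin (2 * ((k : ℝ) - (ℓ : ℝ)) * y)))
      (∑ k ∈ Finset.range (M + 2), ∑ ℓ ∈ Finset.range (M + 2),
        ((M + 1).choose k : ℝ) * ((M + 1).choose ℓ : ℝ)
          * (2 * ((k : ℝ) - (ℓ : ℝ)) *
            (2 * ((k : ℝ) - (ℓ : ℝ)) * Real.cos (2 * ((k : ℝ) - (ℓ : ℝ)) * x)))) x := by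
    refine HasDerivAt.fun_sum fun k _ => HasDerivAt.fun_sum fun ℓ _ => ?_
    exact ((hasDerivAt_sin_lin (2 * ((k : ℝ) - (ℓ : ℝ))) x).const_mul
      (2 * ((k : ℝ) - (ℓ : ℝ)))).const_mul _
  have hfun : (fun y : ℝ => ((2 : ℝ) ^ (2 * M + 2) * (2 * (M : ℝ) + 2)) *
      (Real.cos y ^ (2 * M + 1) * Real.sin y))
      = (fun y : ℝ => ∑ k ∈ Finset.range (M + 2), ∑ ℓ ∈ Finset.range (M + 2),
        ((M + 1).choose k : ℝ) * ((M + 1).choose ℓ : ℝ)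
          * (2 * ((k : ℝ) - (ℓ : ℝ)) * Real.sin (2 * ((k : ℝ) - (ℓ : ℝ)) * y))) :=
    funext fun y => base M y
  rw [hfun] at hL
  have huniq := hL.unique hR
  have hsum : (∑ k ∈ Finset.range (M + 2), ∑ ℓ ∈ Finset.range (M + 2),
      ((M + 1).choose k : ℝ) * ((M + 1).choose ℓ : ℝ)
        * (2 * ((k : ℝ) - (ℓ : ℝ)) *
          (2 * ((k : ℝ) - (ℓ : ℝ)) * Real.cos (2 * ((k : ℝ) - (ℓ : ℝ)) * x))))
      = 4 * (∑ k ∈ Finset.range (M + 2), ∑ ℓ ∈ Finset.range (M + 2),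
      ((M + 1).choose k : ℝ) * ((M + 1).choose ℓ : ℝ)
        * (((k : ℝ) - (ℓ : ℝ)) ^ 2 * Real.cos (2 * ((k : ℝ) - (ℓ : ℝ)) * x))) := by
    rw [Finset.mul_sum]
    refine Finset.sum_congr rfl fun k _ => ?_
    rw [Finset.mul_sum]
    exact Finset.sum_congr rfl fun ℓ _ => by ring
  rw [hsum] at huniq
  have hne1 : ((2 : ℝ) ^ (2 * M + 1) * ((M : ℝ) + 1)) ≠ 0 := by positivity
  have hne2 : (2 * (M : ℝ) + 1) ≠ 0 := by positivity
  set S := (∑ k ∈ Finset.range (M + 2), ∑ ℓ ∈ Finset.range (M + 2),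
    ((M + 1).choose k : ℝ) * ((M + 1).choose ℓ : ℝ)
      * (((k : ℝ) - (ℓ : ℝ)) ^ 2 * Real.cos (2 * ((k : ℝ) - (ℓ : ℝ)) * x))) with hS
  field_simp
  linear_combination (-(1 : ℝ) / 4) * huniq

lemma hexp (c m : ℝ) :
    HasDerivAt (fun m : ℝ => Real.exp (-m * c)) (-c * Real.exp (-m * c)) m := by
  have h := ((hasDerivAt_id m).neg.mul_const c).exp
  simp only [Pi.neg_apply, id_eq] at h
  convert h using 1
  ring

lemma part1 (N : ℕ) (μ : ℝ) :
    deriv (deriv (fun m : ℝ =>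
      ∑ k ∈ Finset.range (N + 1), ∑ ℓ ∈ Finset.range (N + 1),
        (N.choose k : ℝ) * (N.choose ℓ : ℝ) * Real.exp (-m * ((k : ℝ) - (ℓ : ℝ)) ^ 2))) μ =
    ∑ k ∈ Finset.range (N + 1), ∑ ℓ ∈ Finset.range (N + 1),
      (N.choose k : ℝ) * (N.choose ℓ : ℝ) * ((k : ℝ) - (ℓ : ℝ)) ^ 4 *
        Real.exp (-μ * ((k : ℝ) - (ℓ : ℝ)) ^ 2) := by
  set I' : ℝ → ℝ := fun m =>
    ∑ k ∈ Finset.range (N + 1), ∑ ℓ ∈ Finset.range (N + 1),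
      (N.choose k : ℝ) * (N.choose ℓ : ℝ) *
        (-((k : ℝ) - (ℓ : ℝ)) ^ 2 * Real.exp (-m * ((k : ℝ) - (ℓ : ℝ)) ^ 2)) with hI'
  have hI : ∀ m : ℝ, HasDerivAt (fun m : ℝ =>
      ∑ k ∈ Finset.range (N + 1), ∑ ℓ ∈ Finset.range (N + 1),
        (N.choose k : ℝ) * (N.choose ℓ : ℝ) * Real.exp (-m * ((k : ℝ) - (ℓ : ℝ)) ^ 2))
      (I' m) m := by
    intro m
    refine HasDerivAt.fun_sum fun k _ => HasDerivAt.fun_sum fun ℓ _ => ?_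
    exact (hexp (((k : ℝ) - (ℓ : ℝ)) ^ 2) m).const_mul _
  have hd1 : deriv (fun m : ℝ =>
      ∑ k ∈ Finset.range (N + 1), ∑ ℓ ∈ Finset.range (N + 1),
        (N.choose k : ℝ) * (N.choose ℓ : ℝ) * Real.exp (-m * ((k : ℝ) - (ℓ : ℝ)) ^ 2)) = I' :=
    funext fun m => (hI m).deriv
  have hI2 : HasDerivAt I'
      (∑ k ∈ Finset.range (N + 1), ∑ ℓ ∈ Finset.range (N + 1),
        (N.choose k : ℝ) * (N.choose ℓ : ℝ) *
          (-((k : ℝ) - (ℓ : ℝ)) ^ 2 *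
            (-((k : ℝ) - (ℓ : ℝ)) ^ 2 * Real.exp (-μ * ((k : ℝ) - (ℓ : ℝ)) ^ 2)))) μ := by
    rw [hI']
    refine HasDerivAt.fun_sum fun k _ => HasDerivAt.fun_sum fun ℓ _ => ?_
    exact ((hexp (((k : ℝ) - (ℓ : ℝ)) ^ 2) μ).const_mul _).const_mul _
  rw [hd1, hI2.deriv]
  refine Finset.sum_congr rfl fun k _ => Finset.sum_congr rfl fun ℓ _ => by ring

lemma one_le_sqrt_pi : 1 ≤ Real.sqrt π := by
  rw [show (1 : ℝ) = Real.sqrt 1 from Real.sqrt_one.symm]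
  exact Real.sqrt_le_sqrt (by linarith [Real.pi_gt_three])

lemma integrable_gauss_trig (j : ℕ) (g : ℝ → ℝ) (hg : Continuous g) (hb : ∀ u, |g u| ≤ 1) :
    Integrable (fun u : ℝ => Real.exp (-u ^ 2) / Real.sqrt π * u ^ j * g u) := by
  refine integrable_of_le_gauss j (by fun_prop) fun u => ?_
  have hπ : (0 : ℝ) < Real.sqrt π := lt_of_lt_of_le one_pos one_le_sqrt_pi
  rw [abs_mul, abs_mul, abs_div, abs_of_nonneg (Real.exp_pos _).le,
    abs_of_nonneg hπ.le, abs_pow]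
  calc Real.exp (-u ^ 2) / Real.sqrt π * |u| ^ j * |g u|
      ≤ Real.exp (-u ^ 2) / Real.sqrt π * |u| ^ j * 1 := by
        gcongr
        exact hb u
    _ = Real.exp (-u ^ 2) / Real.sqrt π * |u| ^ j := mul_one _
    _ ≤ Real.exp (-u ^ 2) * |u| ^ j := by
        gcongr
        exact div_le_self (Real.exp_pos _).le one_le_sqrt_pi
    _ = |u| ^ j * Real.exp (-u ^ 2) := mul_comm _ _

lemma part2 (N : ℕ) (hN : 1 ≤ N) (μ : ℝ) (hμ : 0 < μ) :
    ∑ k ∈ Finset.range (N + 1), ∑ ℓ ∈ Finset.range (N + 1),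
        (N.choose k : ℝ) * (N.choose ℓ : ℝ) * ((k : ℝ) - (ℓ : ℝ)) ^ 4 *
          Real.exp (-μ * ((k : ℝ) - (ℓ : ℝ)) ^ 2)
      = ((N : ℝ) * 2 ^ (2 * N) / (2 * μ * Real.sqrt μ)) *
          (∫ u : ℝ, (Real.exp (-u ^ 2) / Real.sqrt Real.pi) * u *
            Real.cos (u * Real.sqrt μ) ^ (2 * N - 1) * Real.sin (u * Real.sqrt μ))
        + ((N : ℝ) * (2 * (N : ℝ) - 1) * 2 ^ (2 * N) / (2 * μ)) *
          (∫ u : ℝ, (Real.exp (-u ^ 2) / Real.sqrt Real.pi) * u ^ 2 *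
            Real.cos (u * Real.sqrt μ) ^ (2 * N - 2) * Real.sin (u * Real.sqrt μ) ^ 2)
        - ((N : ℝ) * 2 ^ (2 * N) / (2 * μ)) *
          (∫ u : ℝ, (Real.exp (-u ^ 2) / Real.sqrt Real.pi) * u ^ 2 *
            Real.cos (u * Real.sqrt μ) ^ (2 * N)) := by
  obtain ⟨M, rfl⟩ : ∃ M, N = M + 1 := ⟨N - 1, by omega⟩
  simp only [show 2 * (M + 1) = 2 * M + 2 from by omega, show 2 * M + 2 - 1 = 2 * M + 1 from by
    omega, show 2 * M + 2 - 2 = 2 * M from by omega, show M + 1 + 1 = M + 2 from rfl]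
  set c := Real.sqrt μ with hc
  have hc0 : 0 < c := Real.sqrt_pos.mpr hμ
  have hc2 : c ^ 2 = μ := Real.sq_sqrt hμ.le
  have hπ : Real.sqrt π ≠ 0 := by positivity
  -- basic integral values
  have hint1 : ∀ d : ℝ, (∫ u : ℝ, Real.exp (-u ^ 2) / Real.sqrt π * u *
      Real.sin (2 * d * (u * c))) = d * c * Real.exp (-μ * d ^ 2) := by
    intro d
    have h := gauss1 (2 * d * c)
    have hrw : (fun u : ℝ => Real.exp (-u ^ 2) / Real.sqrt π * u *
        Real.sin (2 * d * (u * c)))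
        = fun u : ℝ => (Real.sqrt π)⁻¹ *
          (u * Real.exp (-u ^ 2) * Real.sin (2 * d * c * u)) := by
      funext u
      rw [show 2 * d * (u * c) = 2 * d * c * u from by ring, div_eq_mul_inv]
      ring
    rw [hrw, integral_const_mul _ _, h,
      show -(2 * d * c) ^ 2 / 4 = -μ * d ^ 2 from by rw [← hc2]; ring]
    field_simp
  have hint2 : ∀ d : ℝ, (∫ u : ℝ, Real.exp (-u ^ 2) / Real.sqrt π * u ^ 2 *
      Real.cos (2 * d * (u * c))) = (1 / 2 - μ * d ^ 2) * Real.exp (-μ * d ^ 2) := by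
    intro d
    have h := gauss2 (2 * d * c)
    have hrw : (fun u : ℝ => Real.exp (-u ^ 2) / Real.sqrt π * u ^ 2 *
        Real.cos (2 * d * (u * c)))
        = fun u : ℝ => (Real.sqrt π)⁻¹ *
          (u ^ 2 * Real.exp (-u ^ 2) * Real.cos (2 * d * c * u)) := by
      funext u
      rw [show 2 * d * (u * c) = 2 * d * c * u from by ring, div_eq_mul_inv]
      ring
    rw [hrw, integral_const_mul _ _, h,
      show -(2 * d * c) ^ 2 / 4 = -μ * d ^ 2 from by rw [← hc2]; ring,
      show (1 / 2 - (2 * d * c) ^ 2 / 4) = (1 / 2 - μ * d ^ 2) from by rw [← hc2]; ring]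
    field_simp
  -- integrability of summands
  have hb1 : ∀ (d : ℝ), Integrable (fun u : ℝ => Real.exp (-u ^ 2) / Real.sqrt π * u *
      Real.sin (2 * d * (u * c))) := by
    intro d
    have := integrable_gauss_trig 1 (fun u => Real.sin (2 * d * (u * c))) (by fun_prop)
      (fun u => abs_sin_le_one _)
    simpa [pow_one] using this
  have hb2 : ∀ (d : ℝ), Integrable (fun u : ℝ => Real.exp (-u ^ 2) / Real.sqrt π * u ^ 2 *
      Real.cos (2 * d * (u * c))) := by
    intro d
    exact integrable_gauss_trig 2 (fun u => Real.cos (2 * d * (u * c))) (by fun_prop)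
      (fun u => abs_cos_le_one _)
  have hbP : Integrable (fun u : ℝ => Real.exp (-u ^ 2) / Real.sqrt π * u ^ 2 *
      Real.cos (u * c) ^ (2 * M + 2)) := by
    refine integrable_gauss_trig 2 (fun u => Real.cos (u * c) ^ (2 * M + 2)) (by fun_prop)
      (fun u => ?_)
    rw [abs_pow]
    exact pow_le_one₀ (abs_nonneg _) (abs_cos_le_one _)
  -- first integral
  have hJ1 : (∫ u : ℝ, Real.exp (-u ^ 2) / Real.sqrt π * u *
      Real.cos (u * c) ^ (2 * M + 1) * Real.sin (u * c))
      = c / ((2 : ℝ) ^ (2 * M + 2) * ((M : ℝ) + 1)) *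
        ∑ k ∈ Finset.range (M + 2), ∑ ℓ ∈ Finset.range (M + 2),
          ((M + 1).choose k : ℝ) * ((M + 1).choose ℓ : ℝ) *
            (((k : ℝ) - (ℓ : ℝ)) ^ 2 * Real.exp (-μ * ((k : ℝ) - (ℓ : ℝ)) ^ 2)) := by
    have hpt1 : ∀ u : ℝ, Real.exp (-u ^ 2) / Real.sqrt π * u *
        Real.cos (u * c) ^ (2 * M + 1) * Real.sin (u * c)
        = ∑ k ∈ Finset.range (M + 2), ∑ ℓ ∈ Finset.range (M + 2),
          (((M + 1).choose k : ℝ) * ((M + 1).choose ℓ : ℝ) * ((k : ℝ) - (ℓ : ℝ)) /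
              ((2 : ℝ) ^ (2 * M + 2) * ((M : ℝ) + 1))) *
            (Real.exp (-u ^ 2) / Real.sqrt π * u *
              Real.sin (2 * ((k : ℝ) - (ℓ : ℝ)) * (u * c))) := by
      intro u
      rw [mul_assoc (Real.exp (-u ^ 2) / Real.sqrt π * u), D1 M (u * c),
        Finset.sum_div, Finset.mul_sum]
      refine Finset.sum_congr rfl fun k _ => ?_
      rw [Finset.sum_div, Finset.mul_sum]
      refine Finset.sum_congr rfl fun ℓ _ => ?_
      ring
    simp only [hpt1]
    rw [integral_finset_sum _ fun k _ => integrable_finset_sum _ fun ℓ _ =>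
      (hb1 _).const_mul _, Finset.mul_sum]
    refine Finset.sum_congr rfl fun k _ => ?_
    rw [integral_finset_sum _ fun ℓ _ => (hb1 _).const_mul _, Finset.mul_sum]
    refine Finset.sum_congr rfl fun ℓ _ => ?_
    rw [integral_const_mul _ _, hint1 ((k : ℝ) - (ℓ : ℝ))]
    ring
  -- third integral
  have hJ3 : (∫ u : ℝ, Real.exp (-u ^ 2) / Real.sqrt π * u ^ 2 *
      Real.cos (u * c) ^ (2 * M + 2))
      = ((2 : ℝ) ^ (2 * M + 2))⁻¹ *
        ∑ k ∈ Finset.range (M + 2), ∑ ℓ ∈ Finset.range (M + 2),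
          ((M + 1).choose k : ℝ) * ((M + 1).choose ℓ : ℝ) *
            ((1 / 2 - μ * ((k : ℝ) - (ℓ : ℝ)) ^ 2) *
              Real.exp (-μ * ((k : ℝ) - (ℓ : ℝ)) ^ 2)) := by
    have hpt3 : ∀ u : ℝ, Real.exp (-u ^ 2) / Real.sqrt π * u ^ 2 *
        Real.cos (u * c) ^ (2 * M + 2)
        = ∑ k ∈ Finset.range (M + 2), ∑ ℓ ∈ Finset.range (M + 2),
          (((M + 1).choose k : ℝ) * ((M + 1).choose ℓ : ℝ) / (2 : ℝ) ^ (2 * M + 2)) *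
            (Real.exp (-u ^ 2) / Real.sqrt π * u ^ 2 *
              Real.cos (2 * ((k : ℝ) - (ℓ : ℝ)) * (u * c))) := by
      intro u
      have h' : Real.cos (u * c) ^ (2 * M + 2)
          = (∑ k ∈ Finset.range (M + 2), ∑ ℓ ∈ Finset.range (M + 2),
            ((M + 1).choose k : ℝ) * ((M + 1).choose ℓ : ℝ)
              * Real.cos (2 * ((k : ℝ) - (ℓ : ℝ)) * (u * c))) / (2 : ℝ) ^ (2 * M + 2) := by
        rw [eq_div_iff (by positivity : ((2 : ℝ) ^ (2 * M + 2)) ≠ 0)]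
        linear_combination cospow' M (u * c)
      rw [h', Finset.sum_div, Finset.mul_sum]
      refine Finset.sum_congr rfl fun k _ => ?_
      rw [Finset.sum_div, Finset.mul_sum]
      refine Finset.sum_congr rfl fun ℓ _ => ?_
      ring
    simp only [hpt3]
    rw [integral_finset_sum _ fun k _ => integrable_finset_sum _ fun ℓ _ =>
      (hb2 _).const_mul _, Finset.mul_sum]
    refine Finset.sum_congr rfl fun k _ => ?_
    rw [integral_finset_sum _ fun ℓ _ => (hb2 _).const_mul _, Finset.mul_sum]
    refine Finset.sum_congr rfl fun ℓ _ => ?_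
    rw [integral_const_mul _ _, hint2 ((k : ℝ) - (ℓ : ℝ))]
    ring
  -- second integral
  have hJ2 : (∫ u : ℝ, Real.exp (-u ^ 2) / Real.sqrt π * u ^ 2 *
      Real.cos (u * c) ^ (2 * M) * Real.sin (u * c) ^ 2)
      = (((2 : ℝ) ^ (2 * M + 2))⁻¹ *
          (∑ k ∈ Finset.range (M + 2), ∑ ℓ ∈ Finset.range (M + 2),
            ((M + 1).choose k : ℝ) * ((M + 1).choose ℓ : ℝ) *
              ((1 / 2 - μ * ((k : ℝ) - (ℓ : ℝ)) ^ 2) *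
                Real.exp (-μ * ((k : ℝ) - (ℓ : ℝ)) ^ 2)))
        - (∑ k ∈ Finset.range (M + 2), ∑ ℓ ∈ Finset.range (M + 2),
            (((M + 1).choose k : ℝ) * ((M + 1).choose ℓ : ℝ) * ((k : ℝ) - (ℓ : ℝ)) ^ 2 /
                ((2 : ℝ) ^ (2 * M + 1) * ((M : ℝ) + 1))) *
              ((1 / 2 - μ * ((k : ℝ) - (ℓ : ℝ)) ^ 2) *
                Real.exp (-μ * ((k : ℝ) - (ℓ : ℝ)) ^ 2))))
        / (2 * (M : ℝ) + 1) := by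
    have hpt2 : ∀ u : ℝ, Real.exp (-u ^ 2) / Real.sqrt π * u ^ 2 *
        Real.cos (u * c) ^ (2 * M) * Real.sin (u * c) ^ 2
        = (Real.exp (-u ^ 2) / Real.sqrt π * u ^ 2 * Real.cos (u * c) ^ (2 * M + 2)
          - ∑ k ∈ Finset.range (M + 2), ∑ ℓ ∈ Finset.range (M + 2),
            (((M + 1).choose k : ℝ) * ((M + 1).choose ℓ : ℝ) * ((k : ℝ) - (ℓ : ℝ)) ^ 2 /
                ((2 : ℝ) ^ (2 * M + 1) * ((M : ℝ) + 1))) *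
              (Real.exp (-u ^ 2) / Real.sqrt π * u ^ 2 *
                Real.cos (2 * ((k : ℝ) - (ℓ : ℝ)) * (u * c))))
          / (2 * (M : ℝ) + 1) := by
      intro u
      rw [mul_assoc (Real.exp (-u ^ 2) / Real.sqrt π * u ^ 2), D2 M (u * c)]
      have hS : (∑ k ∈ Finset.range (M + 2), ∑ ℓ ∈ Finset.range (M + 2),
          (((M + 1).choose k : ℝ) * ((M + 1).choose ℓ : ℝ) * ((k : ℝ) - (ℓ : ℝ)) ^ 2 /
              ((2 : ℝ) ^ (2 * M + 1) * ((M : ℝ) + 1))) *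
            (Real.exp (-u ^ 2) / Real.sqrt π * u ^ 2 *
              Real.cos (2 * ((k : ℝ) - (ℓ : ℝ)) * (u * c))))
          = Real.exp (-u ^ 2) / Real.sqrt π * u ^ 2 *
            ((∑ k ∈ Finset.range (M + 2), ∑ ℓ ∈ Finset.range (M + 2),
              ((M + 1).choose k : ℝ) * ((M + 1).choose ℓ : ℝ) *
                (((k : ℝ) - (ℓ : ℝ)) ^ 2 * Real.cos (2 * ((k : ℝ) - (ℓ : ℝ)) * (u * c))))
              / ((2 : ℝ) ^ (2 * M + 1) * ((M : ℝ) + 1))) := by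
        rw [Finset.sum_div, Finset.mul_sum]
        refine Finset.sum_congr rfl fun k _ => ?_
        rw [Finset.sum_div, Finset.mul_sum]
        refine Finset.sum_congr rfl fun ℓ _ => ?_
        ring
      rw [hS]
      ring
    simp only [hpt2]
    rw [integral_div, integral_sub hbP (integrable_finset_sum _ fun k _ =>
      integrable_finset_sum _ fun ℓ _ => (hb2 _).const_mul _), hJ3]
    congr 1
    congr 1
    rw [integral_finset_sum _ fun k _ => integrable_finset_sum _ fun ℓ _ =>
      (hb2 _).const_mul _]
    refine Finset.sum_congr rfl fun k _ => ?_
    rw [integral_finset_sum _ fun ℓ _ => (hb2 _).const_mul _]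
    refine Finset.sum_congr rfl fun ℓ _ => ?_
    rw [integral_const_mul _ _, hint2 ((k : ℝ) - (ℓ : ℝ))]
  rw [hJ1, hJ2, hJ3]
  -- algebraic endgame
  have hV : (∑ k ∈ Finset.range (M + 2), ∑ ℓ ∈ Finset.range (M + 2),
      (((M + 1).choose k : ℝ) * ((M + 1).choose ℓ : ℝ) * ((k : ℝ) - (ℓ : ℝ)) ^ 2 /
          ((2 : ℝ) ^ (2 * M + 1) * ((M : ℝ) + 1))) *
        ((1 / 2 - μ * ((k : ℝ) - (ℓ : ℝ)) ^ 2) *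
          Real.exp (-μ * ((k : ℝ) - (ℓ : ℝ)) ^ 2)))
      = ((2 : ℝ) ^ (2 * M + 1) * ((M : ℝ) + 1))⁻¹ *
        ((1 / 2) * (∑ k ∈ Finset.range (M + 2), ∑ ℓ ∈ Finset.range (M + 2),
          ((M + 1).choose k : ℝ) * ((M + 1).choose ℓ : ℝ) *
            (((k : ℝ) - (ℓ : ℝ)) ^ 2 * Real.exp (-μ * ((k : ℝ) - (ℓ : ℝ)) ^ 2)))
        - μ * (∑ k ∈ Finset.range (M + 2), ∑ ℓ ∈ Finset.range (M + 2),
          ((M + 1).choose k : ℝ) * ((M + 1).choose ℓ : ℝ) * ((k : ℝ) - (ℓ : ℝ)) ^ 4 *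
            Real.exp (-μ * ((k : ℝ) - (ℓ : ℝ)) ^ 2))) := by
    rw [Finset.mul_sum, Finset.mul_sum, ← Finset.sum_sub_distrib, Finset.mul_sum]
    refine Finset.sum_congr rfl fun k _ => ?_
    rw [Finset.mul_sum, Finset.mul_sum, ← Finset.sum_sub_distrib, Finset.mul_sum]
    refine Finset.sum_congr rfl fun ℓ _ => ?_
    ring
  rw [hV]
  set u1 : ℝ := ∑ k ∈ Finset.range (M + 2), ∑ ℓ ∈ Finset.range (M + 2),
    ((M + 1).choose k : ℝ) * ((M + 1).choose ℓ : ℝ) *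
      (((k : ℝ) - (ℓ : ℝ)) ^ 2 * Real.exp (-μ * ((k : ℝ) - (ℓ : ℝ)) ^ 2)) with hu1
  set t0 : ℝ := ∑ k ∈ Finset.range (M + 2), ∑ ℓ ∈ Finset.range (M + 2),
    ((M + 1).choose k : ℝ) * ((M + 1).choose ℓ : ℝ) *
      ((1 / 2 - μ * ((k : ℝ) - (ℓ : ℝ)) ^ 2) * Real.exp (-μ * ((k : ℝ) - (ℓ : ℝ)) ^ 2))
    with ht0
  set s2 : ℝ := ∑ k ∈ Finset.range (M + 2), ∑ ℓ ∈ Finset.range (M + 2),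
    ((M + 1).choose k : ℝ) * ((M + 1).choose ℓ : ℝ) * ((k : ℝ) - (ℓ : ℝ)) ^ 4 *
      Real.exp (-μ * ((k : ℝ) - (ℓ : ℝ)) ^ 2) with hs2
  rw [← hc2]
  have hM1 : ((M : ℝ) + 1) ≠ 0 := by positivity
  have h2M1 : (2 * (M : ℝ) + 1) ≠ 0 := by positivity
  have hpow : ((2 : ℝ) ^ (2 * M + 1)) ≠ 0 := by positivity
  have hpow2 : ((2 : ℝ) ^ (2 * M + 2)) ≠ 0 := by positivity
  have hcne : c ≠ 0 := ne_of_gt hc0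
  push_cast
  field_simp
  ring

end PuritySum

/-- For `N ≥ 1` and `μ > 0`, the sum `I₂(μ) = Σ_{k,ℓ} C(N,k) C(N,ℓ) (k-ℓ)⁴ e^{-μ(k-ℓ)²}`
equals `d²I(μ)/dμ²` for `I(μ) = Σ_{k,ℓ} C(N,k) C(N,ℓ) e^{-μ(k-ℓ)²}`, and admits the integral
representation
`I₂(μ) = (N·2^{2N}/(2μ√μ)) ∫ (e^{-u²}/√π) u cos^{2N-1}(u√μ) sin(u√μ) du
       + (N(2N-1)·2^{2N}/(2μ)) ∫ (e^{-u²}/√π) u² cos^{2N-2}(u√μ) sin²(u√μ) du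
       − (N·2^{2N}/(2μ)) ∫ (e^{-u²}/√π) u² cos^{2N}(u√μ) du`. -/
theorem second_derivative_of_purity_sum (N : ℕ) (hN : 1 ≤ N) (μ : ℝ) (hμ : 0 < μ) :
    let I : ℝ → ℝ := fun m =>
      ∑ k ∈ Finset.range (N + 1), ∑ ℓ ∈ Finset.range (N + 1),
        (N.choose k : ℝ) * (N.choose ℓ : ℝ) * Real.exp (-m * ((k : ℝ) - (ℓ : ℝ)) ^ 2)
    let I₂ : ℝ :=
      ∑ k ∈ Finset.range (N + 1), ∑ ℓ ∈ Finset.range (N + 1),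
        (N.choose k : ℝ) * (N.choose ℓ : ℝ) * ((k : ℝ) - (ℓ : ℝ)) ^ 4 *
          Real.exp (-μ * ((k : ℝ) - (ℓ : ℝ)) ^ 2)
    deriv (deriv I) μ = I₂ ∧
    I₂ = ((N : ℝ) * 2 ^ (2 * N) / (2 * μ * Real.sqrt μ)) *
          (∫ u : ℝ, (Real.exp (-u ^ 2) / Real.sqrt Real.pi) * u *
            Real.cos (u * Real.sqrt μ) ^ (2 * N - 1) * Real.sin (u * Real.sqrt μ))
        + ((N : ℝ) * (2 * (N : ℝ) - 1) * 2 ^ (2 * N) / (2 * μ)) *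
          (∫ u : ℝ, (Real.exp (-u ^ 2) / Real.sqrt Real.pi) * u ^ 2 *
            Real.cos (u * Real.sqrt μ) ^ (2 * N - 2) * Real.sin (u * Real.sqrt μ) ^ 2)
        - ((N : ℝ) * 2 ^ (2 * N) / (2 * μ)) *
          (∫ u : ℝ, (Real.exp (-u ^ 2) / Real.sqrt Real.pi) * u ^ 2 *
            Real.cos (u * Real.sqrt μ) ^ (2 * N)) := by
  intro I I₂
  exact ⟨PuritySum.part1 N μ, PuritySum.part2 N hN μ hμ⟩
end

section
/- Fix N ≥ 1 and γ > 0. For m ∈ {0, 2, 4} and t ≥ 0 define S_m(t) = 2^{-2N} Σ_{k,ℓ=0}^{N} binom(N,k) binom(N,ℓ) (k−ℓ)^m e^{-γ t (k−ℓ)²}, and define the dissipative quantum Fisher information F(t) = t² ( S₄(t)/S₀(t) − S₂(t)²/S₀(t)² ). Then lim_{t→0⁺} F(t)/t² = N(2N−1)/4. In particular, for small times F(t) = (t² N²/2)(1 − 1/(2N)) + o(t²), so F(t) scales quadratically in N, beating the shot-noise (linear-in-N) limit. -/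
open Filter Topology Asymptotics

private lemma sum_choose_mul_choose (N r : ℕ) :
    (∑ k ∈ Finset.range (N + 1), N.choose k * k.choose r) * 2 ^ r
      = N.choose r * 2 ^ N := by
  rcases le_or_gt r N with h | h
  · have h1 : ∑ k ∈ Finset.range (N + 1), N.choose k * k.choose r
        = ∑ k ∈ Finset.Ico r (N + 1), N.choose k * k.choose r := by
      refine (Finset.sum_subset ?_ ?_).symm
      · intro x hx
        simp only [Finset.mem_Ico] at hx
        exact Finset.mem_range.2 hx.2
      · intro x hx hx'
        simp only [Finset.mem_range] at hx
        simp only [Finset.mem_Ico, not_and, not_lt] at hx'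
        have : x < r := by
          by_contra hc
          exact absurd (hx' (le_of_not_gt hc)) (by omega)
        rw [Nat.choose_eq_zero_of_lt this, Nat.mul_zero]
    rw [h1, Finset.sum_Ico_eq_sum_range]
    have h2 : ∀ j ∈ Finset.range (N + 1 - r),
        N.choose (r + j) * (r + j).choose r = N.choose r * (N - r).choose j := by
      intro j hj
      have hj' : j < N + 1 - r := Finset.mem_range.1 hj
      have hkn : r + j ≤ N := by omega
      rw [Nat.choose_mul (Nat.le_add_right r j), Nat.add_sub_cancel_left]
    rw [Finset.sum_congr rfl h2, ← Finset.mul_sum]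
    have : N + 1 - r = (N - r) + 1 := by omega
    rw [this, Nat.sum_range_choose, Nat.mul_assoc, ← pow_add, Nat.sub_add_cancel h]
  · have hz : ∀ k ∈ Finset.range (N + 1), N.choose k * k.choose r = 0 := by
      intro k hk
      have : k < r := lt_of_le_of_lt (Nat.lt_succ_iff.1 (Finset.mem_range.1 hk)) h
      rw [Nat.choose_eq_zero_of_lt this, Nat.mul_zero]
    rw [Finset.sum_congr rfl hz, Finset.sum_const, Nat.choose_eq_zero_of_lt h]
    simp

private lemma sum_choose_mul_choose_real (N r : ℕ) :
    ∑ k ∈ Finset.range (N + 1), (N.choose k : ℝ) * (k.choose r : ℝ)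
      = (N.choose r : ℝ) * 2 ^ N / 2 ^ r := by
  have h := congrArg (Nat.cast : ℕ → ℝ) (sum_choose_mul_choose N r)
  push_cast at h
  field_simp
  linarith [h]

private lemma cast_choose_two' (k : ℕ) :
    ((k.choose 2 : ℕ) : ℝ) = (k : ℝ) * ((k : ℝ) - 1) / 2 := by
  induction k with
  | zero => simp
  | succ n ih =>
    rw [show (n + 1).choose 2 = n.choose 1 + n.choose 2 from Nat.choose_succ_succ n 1]
    push_cast [ih, Nat.choose_one_right]
    ring

private lemma cast_choose_three' (k : ℕ) :
    ((k.choose 3 : ℕ) : ℝ) = (k : ℝ) * ((k : ℝ) - 1) * ((k : ℝ) - 2) / 6 := by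
  induction k with
  | zero => simp
  | succ n ih =>
    rw [show (n + 1).choose 3 = n.choose 2 + n.choose 3 from Nat.choose_succ_succ n 2]
    push_cast [ih, cast_choose_two']
    ring

private lemma cast_choose_four' (k : ℕ) :
    ((k.choose 4 : ℕ) : ℝ) = (k : ℝ) * ((k : ℝ) - 1) * ((k : ℝ) - 2) * ((k : ℝ) - 3) / 24 := by
  induction k with
  | zero => simp
  | succ n ih =>
    rw [show (n + 1).choose 4 = n.choose 3 + n.choose 4 from Nat.choose_succ_succ n 3]
    push_cast [ih, cast_choose_three']
    ring

private lemma momentM0 (N : ℕ) :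
    ∑ k ∈ Finset.range (N + 1), (N.choose k : ℝ) * (k : ℝ) ^ 0 = 2 ^ N := by
  simp only [pow_zero, mul_one]
  rw [← Nat.cast_sum, Nat.sum_range_choose]
  push_cast; ring

private lemma momentM1 (N : ℕ) :
    ∑ k ∈ Finset.range (N + 1), (N.choose k : ℝ) * (k : ℝ) ^ 1 = (N : ℝ) * 2 ^ N / 2 := by
  have h := sum_choose_mul_choose_real N 1
  simp only [Nat.choose_one_right] at h
  rw [Finset.sum_congr rfl (fun k _ => by rw [pow_one] : ∀ k ∈ Finset.range (N + 1),
    (N.choose k : ℝ) * (k : ℝ) ^ 1 = (N.choose k : ℝ) * (k : ℝ))]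
  rw [h]; norm_num

private lemma momentM2 (N : ℕ) :
    ∑ k ∈ Finset.range (N + 1), (N.choose k : ℝ) * (k : ℝ) ^ 2
      = ((N : ℝ) ^ 2 + N) * 2 ^ N / 4 := by
  have h1 := sum_choose_mul_choose_real N 1
  have h2 := sum_choose_mul_choose_real N 2
  simp only [Nat.choose_one_right] at h1
  have step : ∀ k ∈ Finset.range (N + 1),
      (N.choose k : ℝ) * (k : ℝ) ^ 2
        = 2 * ((N.choose k : ℝ) * (k.choose 2 : ℝ)) + (N.choose k : ℝ) * (k : ℝ) := by
    intro k _
    rw [cast_choose_two']; ring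
  rw [Finset.sum_congr rfl step, Finset.sum_add_distrib, ← Finset.mul_sum, h1, h2,
    cast_choose_two']
  field_simp; ring

private lemma momentM3 (N : ℕ) :
    ∑ k ∈ Finset.range (N + 1), (N.choose k : ℝ) * (k : ℝ) ^ 3
      = ((N : ℝ) ^ 3 + 3 * (N : ℝ) ^ 2) * 2 ^ N / 8 := by
  have h1 := sum_choose_mul_choose_real N 1
  have h2 := sum_choose_mul_choose_real N 2
  have h3 := sum_choose_mul_choose_real N 3
  simp only [Nat.choose_one_right] at h1
  have step : ∀ k ∈ Finset.range (N + 1),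
      (N.choose k : ℝ) * (k : ℝ) ^ 3
        = 6 * ((N.choose k : ℝ) * (k.choose 3 : ℝ))
          + (6 * ((N.choose k : ℝ) * (k.choose 2 : ℝ)) + (N.choose k : ℝ) * (k : ℝ)) := by
    intro k _
    rw [cast_choose_two', cast_choose_three']; ring
  rw [Finset.sum_congr rfl step, Finset.sum_add_distrib, Finset.sum_add_distrib,
    ← Finset.mul_sum, ← Finset.mul_sum, h1, h2, h3, cast_choose_two', cast_choose_three']
  field_simp; ring

private lemma momentM4 (N : ℕ) :
    ∑ k ∈ Finset.range (N + 1), (N.choose k : ℝ) * (k : ℝ) ^ 4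
      = ((N : ℝ) ^ 4 + 6 * (N : ℝ) ^ 3 + 3 * (N : ℝ) ^ 2 - 2 * (N : ℝ)) * 2 ^ N / 16 := by
  have h1 := sum_choose_mul_choose_real N 1
  have h2 := sum_choose_mul_choose_real N 2
  have h3 := sum_choose_mul_choose_real N 3
  have h4 := sum_choose_mul_choose_real N 4
  simp only [Nat.choose_one_right] at h1
  have step : ∀ k ∈ Finset.range (N + 1),
      (N.choose k : ℝ) * (k : ℝ) ^ 4
        = 24 * ((N.choose k : ℝ) * (k.choose 4 : ℝ))
          + (36 * ((N.choose k : ℝ) * (k.choose 3 : ℝ))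
            + (14 * ((N.choose k : ℝ) * (k.choose 2 : ℝ)) + (N.choose k : ℝ) * (k : ℝ))) := by
    intro k _
    rw [cast_choose_two', cast_choose_three', cast_choose_four']; ring
  rw [Finset.sum_congr rfl step, Finset.sum_add_distrib, Finset.sum_add_distrib,
    Finset.sum_add_distrib, ← Finset.mul_sum, ← Finset.mul_sum, ← Finset.mul_sum,
    h1, h2, h3, h4, cast_choose_two', cast_choose_three', cast_choose_four']
  field_simp; ring

private lemma double_sum_sq (s : Finset ℕ) (c : ℕ → ℝ) (m0 m1 m2 : ℝ)
    (h0 : ∑ k ∈ s, c k * (k : ℝ) ^ 0 = m0)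
    (h1 : ∑ k ∈ s, c k * (k : ℝ) ^ 1 = m1)
    (h2 : ∑ k ∈ s, c k * (k : ℝ) ^ 2 = m2) :
    ∑ k ∈ s, ∑ ℓ ∈ s, c k * c ℓ * ((k : ℝ) - (ℓ : ℝ)) ^ 2
      = 2 * m2 * m0 - 2 * m1 ^ 2 := by
  have inner : ∀ k ∈ s, ∑ ℓ ∈ s, c k * c ℓ * ((k : ℝ) - (ℓ : ℝ)) ^ 2
      = m0 * (c k * (k : ℝ) ^ 2) + (m1 * (-2 * (c k * (k : ℝ) ^ 1))
        + m2 * (c k * (k : ℝ) ^ 0)) := by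
    intro k _
    rw [← h0, ← h1, ← h2]
    simp only [Finset.sum_mul]
    rw [← Finset.sum_add_distrib, ← Finset.sum_add_distrib]
    exact Finset.sum_congr rfl fun ℓ _ => by ring
  rw [Finset.sum_congr rfl inner]
  simp only [Finset.sum_add_distrib, ← Finset.mul_sum]
  rw [h0, h1, h2]
  ring

private lemma double_sum_quart (s : Finset ℕ) (c : ℕ → ℝ) (m0 m1 m2 m3 m4 : ℝ)
    (h0 : ∑ k ∈ s, c k * (k : ℝ) ^ 0 = m0)
    (h1 : ∑ k ∈ s, c k * (k : ℝ) ^ 1 = m1)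
    (h2 : ∑ k ∈ s, c k * (k : ℝ) ^ 2 = m2)
    (h3 : ∑ k ∈ s, c k * (k : ℝ) ^ 3 = m3)
    (h4 : ∑ k ∈ s, c k * (k : ℝ) ^ 4 = m4) :
    ∑ k ∈ s, ∑ ℓ ∈ s, c k * c ℓ * ((k : ℝ) - (ℓ : ℝ)) ^ 4
      = 2 * m4 * m0 - 8 * m3 * m1 + 6 * m2 ^ 2 := by
  have inner : ∀ k ∈ s, ∑ ℓ ∈ s, c k * c ℓ * ((k : ℝ) - (ℓ : ℝ)) ^ 4
      = m0 * (c k * (k : ℝ) ^ 4) + (m1 * (-4 * (c k * (k : ℝ) ^ 3))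
        + (m2 * (6 * (c k * (k : ℝ) ^ 2)) + (m3 * (-4 * (c k * (k : ℝ) ^ 1))
          + m4 * (c k * (k : ℝ) ^ 0)))) := by
    intro k _
    rw [← h0, ← h1, ← h2, ← h3, ← h4]
    simp only [Finset.sum_mul]
    rw [← Finset.sum_add_distrib, ← Finset.sum_add_distrib, ← Finset.sum_add_distrib,
      ← Finset.sum_add_distrib]
    exact Finset.sum_congr rfl fun ℓ _ => by ring
  rw [Finset.sum_congr rfl inner]
  simp only [Finset.sum_add_distrib, ← Finset.mul_sum]
  rw [h0, h1, h2, h3, h4]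
  ring

/-- Fix `N ≥ 1` and `γ > 0`, and for `m ∈ {0,2,4}` set
`S_m(t) = 2^{-2N} Σ_{k,ℓ} C(N,k) C(N,ℓ) (k-ℓ)^m e^{-γt(k-ℓ)²}` and
`F(t) = t² (S₄(t)/S₀(t) − S₂(t)²/S₀(t)²)` (the dissipative quantum Fisher information).
Then `lim_{t→0⁺} F(t)/t² = N(2N-1)/4`; in particular
`F(t) = (t²N²/2)(1 − 1/(2N)) + o(t²)` as `t → 0⁺`, beating the shot-noise limit. -/
theorem dissipative_QFI_small_time_scaling (N : ℕ) (hN : 1 ≤ N) (γ : ℝ) (hγ : 0 < γ) :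
    let S : ℕ → ℝ → ℝ := fun m t =>
      (1 / (2 : ℝ) ^ (2 * N)) * ∑ k ∈ Finset.range (N + 1), ∑ ℓ ∈ Finset.range (N + 1),
        (N.choose k : ℝ) * (N.choose ℓ : ℝ) * ((k : ℝ) - (ℓ : ℝ)) ^ m *
          Real.exp (-γ * t * ((k : ℝ) - (ℓ : ℝ)) ^ 2)
    let F : ℝ → ℝ := fun t => t ^ 2 * (S 4 t / S 0 t - (S 2 t) ^ 2 / (S 0 t) ^ 2)
    Tendsto (fun t => F t / t ^ 2) (nhdsWithin 0 (Set.Ioi 0))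
      (nhds ((N : ℝ) * (2 * (N : ℝ) - 1) / 4)) ∧
    (fun t => F t - (t ^ 2 * (N : ℝ) ^ 2 / 2) * (1 - 1 / (2 * (N : ℝ))))
      =o[nhdsWithin 0 (Set.Ioi 0)] (fun t => t ^ 2) := by
  intro S F
  have hNR : (1 : ℝ) ≤ (N : ℝ) := by exact_mod_cast hN
  have hNne : (N : ℝ) ≠ 0 := by positivity
  have h2N : (2 : ℝ) ^ N ≠ 0 := by positivity
  have hpow2 : (2 : ℝ) ^ (2 * N) = 2 ^ N * 2 ^ N := by rw [two_mul, pow_add]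
  -- values at t = 0
  have hSzero : ∀ m : ℕ, S m 0 = (1 / (2 : ℝ) ^ (2 * N)) *
      ∑ k ∈ Finset.range (N + 1), ∑ ℓ ∈ Finset.range (N + 1),
        (N.choose k : ℝ) * (N.choose ℓ : ℝ) * ((k : ℝ) - (ℓ : ℝ)) ^ m := by
    intro m
    simp only [S, mul_zero, zero_mul, Real.exp_zero, mul_one]
  have hM0' : ∑ k ∈ Finset.range (N + 1), (N.choose k : ℝ) = 2 ^ N := by
    simpa using momentM0 N
  have e0 : S 0 0 = 1 := by
    rw [hSzero 0]
    have hT0 : ∑ k ∈ Finset.range (N + 1), ∑ ℓ ∈ Finset.range (N + 1),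
        (N.choose k : ℝ) * (N.choose ℓ : ℝ) * ((k : ℝ) - (ℓ : ℝ)) ^ 0
        = 2 ^ N * 2 ^ N := by
      simp only [pow_zero, mul_one]
      rw [← Finset.sum_mul_sum, hM0']
    rw [hT0, hpow2]
    field_simp
  have e2 : S 2 0 = (N : ℝ) / 2 := by
    rw [hSzero 2]
    have hT2 : ∑ k ∈ Finset.range (N + 1), ∑ ℓ ∈ Finset.range (N + 1),
        (N.choose k : ℝ) * (N.choose ℓ : ℝ) * ((k : ℝ) - (ℓ : ℝ)) ^ 2
        = 2 * (((N : ℝ) ^ 2 + N) * 2 ^ N / 4) * (2 ^ N)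
          - 2 * ((N : ℝ) * 2 ^ N / 2) ^ 2 :=
      double_sum_sq _ _ _ _ _ (momentM0 N) (momentM1 N) (momentM2 N)
    rw [hT2, hpow2]
    field_simp
    ring
  have e4 : S 4 0 = (N : ℝ) * (3 * (N : ℝ) - 1) / 4 := by
    rw [hSzero 4]
    have hT4 : ∑ k ∈ Finset.range (N + 1), ∑ ℓ ∈ Finset.range (N + 1),
        (N.choose k : ℝ) * (N.choose ℓ : ℝ) * ((k : ℝ) - (ℓ : ℝ)) ^ 4
        = 2 * (((N : ℝ) ^ 4 + 6 * (N : ℝ) ^ 3 + 3 * (N : ℝ) ^ 2 - 2 * (N : ℝ)) * 2 ^ N / 16)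
              * (2 ^ N)
          - 8 * (((N : ℝ) ^ 3 + 3 * (N : ℝ) ^ 2) * 2 ^ N / 8) * ((N : ℝ) * 2 ^ N / 2)
          + 6 * (((N : ℝ) ^ 2 + N) * 2 ^ N / 4) ^ 2 :=
      double_sum_quart _ _ _ _ _ _ _ (momentM0 N) (momentM1 N) (momentM2 N)
        (momentM3 N) (momentM4 N)
    rw [hT4, hpow2]
    field_simp
    ring
  -- continuity and limits of S m
  have hcont : ∀ m : ℕ, Continuous (S m) := by
    intro m
    apply continuous_const.mul
    apply continuous_finset_sum
    intro k _
    apply continuous_finset_sum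
    intro ℓ _
    exact continuous_const.mul
      (Real.continuous_exp.comp ((continuous_const.mul continuous_id).mul continuous_const))
  have hlim : ∀ m : ℕ, Tendsto (fun t => S m t) (nhdsWithin (0 : ℝ) (Set.Ioi 0))
      (nhds (S m 0)) := fun m => ((hcont m).tendsto 0).mono_left nhdsWithin_le_nhds
  have h0ne : S 0 0 ≠ 0 := by rw [e0]; norm_num
  have hval : S 4 0 / S 0 0 - (S 2 0) ^ 2 / (S 0 0) ^ 2
      = (N : ℝ) * (2 * (N : ℝ) - 1) / 4 := by
    rw [e0, e2, e4]
    norm_num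
    ring
  have hL : Tendsto (fun t => S 4 t / S 0 t - (S 2 t) ^ 2 / (S 0 t) ^ 2)
      (nhdsWithin (0 : ℝ) (Set.Ioi 0)) (nhds ((N : ℝ) * (2 * (N : ℝ) - 1) / 4)) := by
    rw [← hval]
    exact ((hlim 4).div (hlim 0) h0ne).sub
      (((hlim 2).pow 2).div ((hlim 0).pow 2) (pow_ne_zero 2 h0ne))
  have hEq : (fun t => S 4 t / S 0 t - (S 2 t) ^ 2 / (S 0 t) ^ 2)
      =ᶠ[nhdsWithin (0 : ℝ) (Set.Ioi 0)] (fun t => F t / t ^ 2) := by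
    filter_upwards [self_mem_nhdsWithin] with t ht
    have ht2 : (t : ℝ) ^ 2 ≠ 0 := pow_ne_zero 2 (ne_of_gt ht)
    simp only [F]
    exact (mul_div_cancel_left₀ _ ht2).symm
  have part1 : Tendsto (fun t => F t / t ^ 2) (nhdsWithin (0 : ℝ) (Set.Ioi 0))
      (nhds ((N : ℝ) * (2 * (N : ℝ) - 1) / 4)) := hL.congr' hEq
  refine ⟨part1, ?_⟩
  set L : ℝ := (N : ℝ) * (2 * (N : ℝ) - 1) / 4 with hLdef
  have hc : ∀ t : ℝ, (t ^ 2 * (N : ℝ) ^ 2 / 2) * (1 - 1 / (2 * (N : ℝ))) = L * t ^ 2 := by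
    intro t
    rw [hLdef]
    field_simp
    ring
  have goalEq : (fun t : ℝ => F t - (t ^ 2 * (N : ℝ) ^ 2 / 2) * (1 - 1 / (2 * (N : ℝ))))
      = fun t => F t - L * t ^ 2 := by
    funext t; rw [hc t]
  rw [goalEq]
  refine (isLittleO_iff_tendsto' ?_).2 ?_
  · filter_upwards [self_mem_nhdsWithin] with t ht h
    exact absurd h (pow_ne_zero 2 (ne_of_gt ht))
  · have h2 : Tendsto (fun t => F t / t ^ 2 - L) (nhdsWithin (0 : ℝ) (Set.Ioi 0))
        (nhds (L - L)) := part1.sub_const L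
    rw [sub_self] at h2
    refine h2.congr' ?_
    filter_upwards [self_mem_nhdsWithin] with t ht
    have ht2 : (t : ℝ) ^ 2 ≠ 0 := pow_ne_zero 2 (ne_of_gt ht)
    rw [sub_div, mul_div_cancel_right₀ _ ht2]
end
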